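/- arXiv:1206.0587 — 5 statements merged into one kernel-verified Lean document; each statement's English description precedes it below -/
import Mathlib

section
/- Let (G,τ) be a metrizable precompact Hausdorff abelian group. If (G,τ) is ss-characterized, then the group G is countable. -/
open Filter Topology

noncomputable section

namespace SSChar

/-- The circle group `𝕋 = ℝ/ℤ`. -/
abbrev Torus : Type := AddCircle (1 : ℝ)

variable {G : Type*}

/-- The covering condition defining precompactness (total boundedness) of a group
topology: every neighborhood `U` of `0` admits a finite set `F` with `G = F + U`. -/
def PrecompactCover [AddCommGroup G] (t : TopologicalSpace G) : Prop :=
  ∀ U ∈ @nhds G t 0, ∃ F : Set G, F.Finite ∧ ∀ x : G, ∃ f ∈ F, x - f ∈ U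

/-- `t` is a Hausdorff group topology on `G`. -/
def IsHausdorffGroupTopology [AddCommGroup G] (t : TopologicalSpace G) : Prop :=
  @IsTopologicalAddGroup G t _ ∧ @T2Space G t

/-- `t` is a precompact Hausdorff group topology on `G`. -/
def IsPrecompactGroupTopology [AddCommGroup G] (t : TopologicalSpace G) : Prop :=
  IsHausdorffGroupTopology t ∧ PrecompactCover t

/-- The sequence `u` converges to `0` in the topology `t`. -/
def ConvergesToZero [AddCommGroup G] (t : TopologicalSpace G) (u : ℕ → G) : Prop :=
  Filter.Tendsto u Filter.atTop (@nhds G t 0)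

/-- `u` is a TB-sequence: some precompact Hausdorff group topology makes `u → 0`. -/
def IsTBSequence [AddCommGroup G] (u : ℕ → G) : Prop :=
  ∃ t : TopologicalSpace G, IsPrecompactGroupTopology t ∧ ConvergesToZero t u

/-- `t` is the finest precompact Hausdorff group topology in which `u → 0`,
i.e. `t = τ_u`.  (Recall that in Mathlib's order on topologies, finer means `≤`.) -/
def IsTauU [AddCommGroup G] (u : ℕ → G) (t : TopologicalSpace G) : Prop :=
  IsPrecompactGroupTopology t ∧ ConvergesToZero t u ∧
    ∀ t' : TopologicalSpace G, IsPrecompactGroupTopology t' → ConvergesToZero t' u → t ≤ t'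

/-- `t` is the finest Hausdorff group topology in which `u → 0`, i.e. `t = 𝒯_u`. -/
def IsTTu [AddCommGroup G] (u : ℕ → G) (t : TopologicalSpace G) : Prop :=
  IsHausdorffGroupTopology t ∧ ConvergesToZero t u ∧
    ∀ t' : TopologicalSpace G, IsHausdorffGroupTopology t' → ConvergesToZero t' u → t ≤ t'

/-- `(G, t)` is single-sequence characterized: `t = τ_u` for some (TB-)sequence `u`. -/
def SSCharacterized [AddCommGroup G] (t : TopologicalSpace G) : Prop :=
  ∃ u : ℕ → G, IsTauU u t

/-- `χ` is a `t`-continuous character of `G`. -/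
def IsContChar [AddCommGroup G] (t : TopologicalSpace G) (χ : G →+ Torus) : Prop :=
  @Continuous G Torus t _ χ

/-- The group of `t`-continuous characters of `G`. -/
def charGroup (G : Type*) [AddCommGroup G] (t : TopologicalSpace G) : Type _ :=
  {χ : G →+ Torus // IsContChar t χ}

/-- The compact-open topology on the character group: this makes it the
Pontryagin dual `(G,t)^∧`. -/
def charTopology (G : Type*) [AddCommGroup G] (t : TopologicalSpace G) :
    TopologicalSpace (charGroup G t) :=
  TopologicalSpace.generateFrom
    { S | ∃ (K : Set G) (U : Set Torus), @IsCompact G t K ∧ IsOpen U ∧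
        S = { χ : charGroup G t | ∀ x ∈ K, χ.1 x ∈ U } }

/-- The Bohr modification `t⁺` of `t`: the initial topology induced by all
`t`-continuous characters. -/
def bohrModification [AddCommGroup G] (t : TopologicalSpace G) : TopologicalSpace G :=
  ⨅ χ : charGroup G t, TopologicalSpace.induced (χ.1 : G → Torus) inferInstance

/-- The Bohr topology of the (discrete) abelian group `X`: the initial topology
induced by all homomorphisms `X → 𝕋`. -/
def bohrDiscrete (X : Type*) [AddCommGroup X] : TopologicalSpace X :=
  ⨅ χ : X →+ Torus, TopologicalSpace.induced (χ : X → Torus) inferInstance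

/-- The extension topology `ζ̄` on `G` of a group topology `ζ` on the subgroup `H`:
its neighborhood filter at `x` is generated by the sets `x + V`, `V` a
`ζ`-neighborhood of `0` in `H`. -/
def extTopology [AddCommGroup G] (H : AddSubgroup G) (ζ : TopologicalSpace H) :
    TopologicalSpace G :=
  TopologicalSpace.mkOfNhds fun x => Filter.map (fun h : H => x + (h : G)) (@nhds H ζ 0)

/-- The subspace topology induced on a subgroup `H` by a topology `t` on `G`. -/
def restrictTopology [AddCommGroup G] (H : AddSubgroup G) (t : TopologicalSpace G) :
    TopologicalSpace H :=
  t.induced (Subtype.val : H → G)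

/-- The quotient topology on `G ⧸ H` induced by a topology `t` on `G`. -/
def quotientTopology [AddCommGroup G] (H : AddSubgroup G) (t : TopologicalSpace G) :
    TopologicalSpace (G ⧸ H) :=
  t.coinduced (QuotientAddGroup.mk : G → G ⧸ H)

/-- `H` is B-embedded in `(G, t)`: every (algebraic) character of `G ⧸ H` is
continuous in the quotient topology. -/
def IsBEmbedded [AddCommGroup G] (t : TopologicalSpace G) (H : AddSubgroup G) : Prop :=
  ∀ χ : G ⧸ H →+ Torus, @Continuous (G ⧸ H) Torus (quotientTopology H t) _ χ

/-- `t` is the finest precompact extension to `G` of the topology `ζ` on the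
subgroup `H`: `t` is a precompact Hausdorff group topology restricting to `ζ` on `H`,
and every precompact Hausdorff group topology on `G` restricting to `ζ` on `H`
is coarser than `t`. -/
def IsFinestPrecompactExtension [AddCommGroup G] (H : AddSubgroup G)
    (ζ : TopologicalSpace H) (t : TopologicalSpace G) : Prop :=
  IsPrecompactGroupTopology t ∧ restrictTopology H t = ζ ∧
    ∀ t' : TopologicalSpace G, IsPrecompactGroupTopology t' → restrictTopology H t' = ζ →
      t ≤ t'

/-- `𝕋₊`: the image of `[-1/4, 1/4]` under the quotient map `ℝ → 𝕋`. -/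
def Tplus : Set Torus := (fun x : ℝ => (x : Torus)) '' Set.Icc (-(1/4) : ℝ) (1/4)

/-- `A` is quasi-convex in `(G, t)`. -/
def IsQuasiConvex [AddCommGroup G] (t : TopologicalSpace G) (A : Set G) : Prop :=
  ∀ g ∉ A, ∃ χ : G →+ Torus, IsContChar t χ ∧ (∀ a ∈ A, χ a ∈ Tplus) ∧ χ g ∉ Tplus

/-- `(G, t)` is locally quasi-convex: `0` has a neighborhood base of
quasi-convex sets. -/
def IsLocallyQuasiConvex [AddCommGroup G] (t : TopologicalSpace G) : Prop :=
  ∀ U ∈ @nhds G t 0, ∃ V ∈ @nhds G t 0, V ⊆ U ∧ IsQuasiConvex t V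

/-- The weight of a topology: the minimal cardinality of a base. -/
def tweight {X : Type*} (t : TopologicalSpace X) : Cardinal :=
  sInf { c : Cardinal |
    ∃ B : Set (Set X), @TopologicalSpace.IsTopologicalBasis X t B ∧ c = Cardinal.mk B }

/-- `(G, t)` is maximally almost periodic: the `t`-continuous characters
separate the points of `G`. -/
def IsMAP [AddCommGroup G] (t : TopologicalSpace G) : Prop :=
  ∀ x : G, x ≠ 0 → ∃ χ : G →+ Torus, IsContChar t χ ∧ χ x ≠ 0

/-- Two topologies on `G` are compatible: they have the same continuous characters. -/
def Compatible [AddCommGroup G] (t t' : TopologicalSpace G) : Prop :=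
  ∀ χ : G →+ Torus, IsContChar t χ ↔ IsContChar t' χ

/-- `(G, t)` is a MAP-Mackey group: it is a MAP Hausdorff group topology and every
compatible MAP group topology on `G` is coarser. -/
def IsMAPMackey [AddCommGroup G] (t : TopologicalSpace G) : Prop :=
  IsHausdorffGroupTopology t ∧ IsMAP t ∧
    ∀ t' : TopologicalSpace G, @IsTopologicalAddGroup G t' _ → IsMAP t' → Compatible t t' →
      t ≤ t'

/-- `(X, t)` is a k-space: a subset is closed as soon as its intersection with every
compact subset `K` is closed in `K`. -/
def IsKSpace {X : Type*} (t : TopologicalSpace X) : Prop :=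
  ∀ A : Set X,
    (∀ K : Set X, @IsCompact X t K →
      @IsClosed K (t.induced (Subtype.val : K → X)) {x : K | (x : X) ∈ A}) →
    @IsClosed X t A

/-- `(X, t)` is pseudocompact: every continuous real-valued function is bounded. -/
def IsPseudocompact {X : Type*} (t : TopologicalSpace X) : Prop :=
  ∀ f : X → ℝ, @Continuous X ℝ t _ f → ∃ C : ℝ, ∀ x : X, |f x| ≤ C

/-- `(X, t)` is sequentially complete: every Cauchy sequence (w.r.t. the group
uniformity) converges. -/
def SeqComplete {X : Type*} [AddCommGroup X] (t : TopologicalSpace X) : Prop :=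
  ∀ x : ℕ → X, (∀ U ∈ @nhds X t 0, ∃ N : ℕ, ∀ m ≥ N, ∀ n ≥ N, x m - x n ∈ U) →
    ∃ a : X, Filter.Tendsto x Filter.atTop (@nhds X t a)



/-! ### Auxiliary development -/

section CircleFacts

/-- On the circle, the norm of the class of a real number `r` with `|r| ≤ 1/2` is `|r|`. -/
lemma torus_norm_coe {r : ℝ} (hr : |r| ≤ 2⁻¹) : ‖((r : ℝ) : Torus)‖ = |r| := by
  have h := abs_le.mp hr
  rcases lt_or_eq_of_le h.2 with h2 | h2
  · have h0 : round r = 0 := by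
      rw [round_eq_zero_iff]
      constructor
      · have : -(1/2 : ℝ) = -(2⁻¹) := by norm_num
        rw [this]; exact h.1
      · have : (1/2 : ℝ) = 2⁻¹ := by norm_num
        rw [this]; exact h2
    rw [AddCircle.norm_eq]
    simp [h0]
  · have hround : round r = 1 := by
      rw [h2, round_eq]; norm_num
    rw [AddCircle.norm_eq]
    simp only [inv_one, one_mul, mul_one, hround]
    rw [h2]; norm_num

/-- Every point of the circle has a representative of absolute value at most `1/2`. -/
lemma torus_rep_small (t : Torus) : ∃ s : ℝ, |s| ≤ 2⁻¹ ∧ ((s : ℝ) : Torus) = t := by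
  obtain ⟨r, hr, rfl⟩ := AddCircle.eq_coe_Ico t
  rcases le_or_gt r 2⁻¹ with h | h
  · exact ⟨r, by rw [abs_of_nonneg hr.1]; exact h, rfl⟩
  · refine ⟨r - 1, ?_, ?_⟩
    · rw [abs_of_nonpos (by linarith [hr.2])]
      linarith
    · rw [AddCircle.coe_sub]
      have : ((1 : ℝ) : Torus) = 0 := AddCircle.coe_period 1
      rw [this, sub_zero]

/-- A point of the circle all of whose natural multiples have norm at most `1/4` is zero. -/
lemma torus_eq_zero_of_norm_nsmul_le {t : Torus} (h : ∀ n : ℕ, ‖(n • t : Torus)‖ ≤ 4⁻¹) :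
    t = 0 := by
  obtain ⟨s, hs, rfl⟩ := torus_rep_small t
  rcases eq_or_ne s 0 with rfl | hs0
  · exact (AddCircle.coe_eq_zero_iff 1).mpr ⟨0, by simp⟩
  have hd : 0 < |s| := abs_pos.mpr hs0
  have hd4 : |s| ≤ 4⁻¹ := by
    have h1 := h 1
    rwa [one_smul, torus_norm_coe hs] at h1
  have hex : ∃ n : ℕ, 4⁻¹ < (n : ℝ) * |s| := by
    obtain ⟨n, hn⟩ := exists_nat_gt ((4 : ℝ)⁻¹ / |s|)
    exact ⟨n, by rwa [div_lt_iff₀ hd] at hn⟩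
  have hn := Nat.find_spec hex
  set n := Nat.find hex with hn_def
  have hn0 : n ≠ 0 := by
    intro h0
    rw [h0] at hn
    norm_num at hn
  have hprev : ¬(4 : ℝ)⁻¹ < ((n - 1 : ℕ) : ℝ) * |s| :=
    Nat.find_min hex (Nat.sub_lt (Nat.pos_of_ne_zero hn0) one_pos)
  have hcast : ((n - 1 : ℕ) : ℝ) = (n : ℝ) - 1 := by
    rw [Nat.cast_sub (Nat.one_le_iff_ne_zero.mpr hn0)]; norm_num
  rw [hcast] at hprev
  push_neg at hprev
  have hle : (n : ℝ) * |s| ≤ 2⁻¹ := by nlinarith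
  have habs : |(n : ℝ) * s| = (n : ℝ) * |s| := by
    rw [abs_mul, Nat.abs_cast]
  have hnorm : ‖(n • ((s : ℝ) : Torus) : Torus)‖ = (n : ℝ) * |s| := by
    rw [← AddCircle.coe_nsmul, nsmul_eq_mul, torus_norm_coe (by rw [habs]; exact hle), habs]
  have := h n
  rw [hnorm] at this
  linarith

/-- The canonical representative of a point of the circle in `[0, 1)`. -/
noncomputable def torusRep (t : Torus) : ℝ :=
  ((AddCircle.equivIco 1 0 t : Set.Ico (0 : ℝ) (0 + 1)) : ℝ)

lemma torusRep_mem (t : Torus) : torusRep t ∈ Set.Ico (0 : ℝ) 1 := by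
  have h := (AddCircle.equivIco 1 0 t).2
  have h1 : (0 : ℝ) ≤ torusRep t := h.1
  have h2 : torusRep t < 0 + 1 := h.2
  exact ⟨h1, by linarith⟩

lemma torusRep_coe (t : Torus) : ((torusRep t : ℝ) : Torus) = t :=
  (AddCircle.equivIco 1 0).symm_apply_apply t

end CircleFacts

section DualCountable

/-- A precompact (first countable) Hausdorff group has only countably many
continuous characters. -/
lemma countable_continuousChars {G : Type*} [AddCommGroup G] [τ : TopologicalSpace G]
    [IsTopologicalAddGroup G] [FirstCountableTopology G]
    (hcov : PrecompactCover τ) :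
    Countable {χ : G →+ Torus // Continuous χ} := by
  classical
  obtain ⟨V, hV⟩ := (nhds (0 : G)).exists_antitone_basis
  set L : ℕ → Set (G →+ Torus) :=
    fun m => {χ | Continuous χ ∧ ∀ x ∈ V m, ‖χ x‖ ≤ 16⁻¹} with hL
  have hLm : ∀ m, (L m).Countable := by
    intro m
    obtain ⟨F, hFfin, hFcov⟩ := hcov (V m) (hV.toHasBasis.mem_of_mem trivial)
    haveI := hFfin.to_subtype
    rw [← Set.countable_coe_iff]
    refine Function.Injective.countable
      (f := fun χ : L m => (fun f : F => ⌊(16 : ℝ) * torusRep (χ.1 f)⌋ : F → ℤ)) ?_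
    intro χ ψ hxy
    -- first: the two characters are uniformly close on F
    have key : ∀ f : G, f ∈ F → ‖χ.1 f - ψ.1 f‖ ≤ 16⁻¹ := by
      intro f hf
      have hfl := congrFun hxy ⟨f, hf⟩
      simp only at hfl
      have habs : |(16 : ℝ) * torusRep (χ.1 f) - 16 * torusRep (ψ.1 f)| < 1 :=
        Int.abs_sub_lt_one_of_floor_eq_floor hfl
      have hab : |torusRep (χ.1 f) - torusRep (ψ.1 f)| < 16⁻¹ := by
        rw [← mul_sub, abs_mul] at habs
        have : |(16 : ℝ)| = 16 := by norm_num
        rw [this] at habs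
        linarith
      have heq : χ.1 f - ψ.1 f = ((torusRep (χ.1 f) - torusRep (ψ.1 f) : ℝ) : Torus) := by
        rw [AddCircle.coe_sub, torusRep_coe, torusRep_coe]
      rw [heq, torus_norm_coe (by linarith [hab])]
      linarith
    -- hence their difference is uniformly small on all of G
    set η : G →+ Torus := χ.1 - ψ.1 with hη
    have hηsmall : ∀ x : G, ‖η x‖ ≤ 4⁻¹ := by
      intro x
      obtain ⟨f, hf, hxf⟩ := hFcov x
      have hx1 : ‖η (x - f)‖ ≤ 16⁻¹ + 16⁻¹ := by
        have : η (x - f) = χ.1 (x - f) - ψ.1 (x - f) := by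
          rw [hη, AddMonoidHom.sub_apply]
        rw [this]
        exact le_trans (norm_sub_le _ _) (add_le_add (χ.2.2 _ hxf) (ψ.2.2 _ hxf))
      have hx2 : ‖η f‖ ≤ 16⁻¹ := by
        have : η f = χ.1 f - ψ.1 f := by rw [hη, AddMonoidHom.sub_apply]
        rw [this]; exact key f hf
      have hsplit : η x = η (x - f) + η f := by
        rw [← map_add, sub_add_cancel]
      rw [hsplit]
      calc ‖η (x - f) + η f‖ ≤ ‖η (x - f)‖ + ‖η f‖ := norm_add_le _ _
      _ ≤ (16⁻¹ + 16⁻¹) + 16⁻¹ := add_le_add hx1 hx2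
      _ ≤ 4⁻¹ := by norm_num
    have hηzero : ∀ x : G, η x = 0 := by
      intro x
      refine torus_eq_zero_of_norm_nsmul_le fun n => ?_
      rw [← map_nsmul]
      exact hηsmall (n • x)
    apply Subtype.ext
    apply AddMonoidHom.ext
    intro x
    have := hηzero x
    rw [hη, AddMonoidHom.sub_apply] at this
    exact sub_eq_zero.mp this
  have hsub : {χ : G →+ Torus | Continuous χ} ⊆ ⋃ m, L m := by
    intro χ hχ
    have h0 : χ 0 = 0 := map_zero χ
    have hpre : χ ⁻¹' Metric.closedBall 0 16⁻¹ ∈ nhds (0 : G) := by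
      apply hχ.continuousAt.preimage_mem_nhds
      rw [h0]
      exact Metric.closedBall_mem_nhds 0 (by norm_num)
    obtain ⟨m, -, hm⟩ := hV.toHasBasis.mem_iff.mp hpre
    refine Set.mem_iUnion.mpr ⟨m, hχ, fun x hx => ?_⟩
    have := hm hx
    rwa [Set.mem_preimage, Metric.mem_closedBall, dist_zero_right] at this
  exact ((Set.countable_iUnion hLm).mono hsub).to_subtype

end DualCountable

section Maximality

/-- In a topological abelian group, every neighborhood of zero contains the
difference set of a smaller neighborhood of zero. -/
lemma exists_nhds_sub {G : Type*} [AddCommGroup G] (t : TopologicalSpace G)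
    (hg : @IsTopologicalAddGroup G t _) {U : Set G} (hU : U ∈ @nhds G t 0) :
    ∃ V ∈ @nhds G t 0, ∀ a ∈ V, ∀ b ∈ V, a - b ∈ U := by
  letI := t
  have hc : Filter.Tendsto (fun p : G × G => p.1 - p.2) (nhds ((0 : G), (0 : G))) (nhds 0) := by
    simpa using continuous_sub.tendsto ((0 : G), (0 : G))
  have hm : (fun p : G × G => p.1 - p.2) ⁻¹' U ∈ nhds ((0 : G), (0 : G)) := hc hU
  rw [nhds_prod_eq, Filter.mem_prod_iff] at hm
  obtain ⟨V₁, h₁, V₂, h₂, hsub⟩ := hm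
  refine ⟨V₁ ∩ V₂, Filter.inter_mem h₁ h₂, fun a ha b hb => ?_⟩
  exact hsub (Set.mk_mem_prod ha.1 hb.2)

/-- The infimum of two precompact group topologies is precompact. -/
lemma precompactCover_inf {G : Type*} [AddCommGroup G] {t₁ t₂ : TopologicalSpace G}
    (hg₁ : @IsTopologicalAddGroup G t₁ _) (hg₂ : @IsTopologicalAddGroup G t₂ _)
    (h₁ : PrecompactCover t₁) (h₂ : PrecompactCover t₂) :
    PrecompactCover (t₁ ⊓ t₂) := by
  classical
  intro U hU
  rw [@nhds_inf G t₁ t₂ (0 : G), Filter.mem_inf_iff] at hU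
  obtain ⟨U₁, hU₁, U₂, hU₂, rfl⟩ := hU
  obtain ⟨V₁, hV₁, hVU₁⟩ := exists_nhds_sub t₁ hg₁ hU₁
  obtain ⟨V₂, hV₂, hVU₂⟩ := exists_nhds_sub t₂ hg₂ hU₂
  obtain ⟨F₁, hF₁, hcov₁⟩ := h₁ V₁ hV₁
  obtain ⟨F₂, hF₂, hcov₂⟩ := h₂ V₂ hV₂
  set pick : G × G → G :=
    fun p => if h : ∃ x : G, x - p.1 ∈ V₁ ∧ x - p.2 ∈ V₂ then h.choose else 0 with hpick
  refine ⟨pick '' (F₁ ×ˢ F₂), (hF₁.prod hF₂).image _, fun x => ?_⟩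
  obtain ⟨a, ha, hxa⟩ := hcov₁ x
  obtain ⟨b, hb, hxb⟩ := hcov₂ x
  have hex : ∃ y : G, y - a ∈ V₁ ∧ y - b ∈ V₂ := ⟨x, hxa, hxb⟩
  refine ⟨pick (a, b), Set.mem_image_of_mem _ (Set.mk_mem_prod ha hb), ?_⟩
  have hpq : pick (a, b) = hex.choose := dif_pos hex
  have hspec := hex.choose_spec
  rw [hpq]
  constructor
  · have := hVU₁ (x - a) hxa (hex.choose - a) hspec.1
    rwa [sub_sub_sub_cancel_right] at this
  · have := hVU₂ (x - b) hxb (hex.choose - b) hspec.2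
    rwa [sub_sub_sub_cancel_right] at this

/-- The topology induced by a single character is precompact. -/
lemma precompactCover_induced {G : Type*} [AddCommGroup G] (χ : G →+ Torus) :
    PrecompactCover (TopologicalSpace.induced (χ : G → Torus) inferInstance) := by
  classical
  intro U hU
  rw [nhds_induced] at hU
  obtain ⟨W, hW, hWU⟩ := hU
  rw [map_zero] at hW
  obtain ⟨ε, hε, hball⟩ := Metric.mem_nhds_iff.mp hW
  obtain ⟨T, hT⟩ := isCompact_univ.elim_finite_subcover
    (fun t : Torus => Metric.ball t (ε / 2)) (fun t => Metric.isOpen_ball)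
    (fun t _ => Set.mem_iUnion.mpr ⟨t, Metric.mem_ball_self (by linarith)⟩)
  set pick : Torus → G :=
    fun t => if h : ∃ g : G, χ g ∈ Metric.ball t (ε / 2) then h.choose else 0 with hpick
  refine ⟨pick '' (T : Set Torus), T.finite_toSet.image _, fun x => ?_⟩
  have hx := hT (Set.mem_univ (χ x))
  rw [Set.mem_iUnion₂] at hx
  obtain ⟨t, ht, hxt⟩ := hx
  have hex : ∃ g : G, χ g ∈ Metric.ball t (ε / 2) := ⟨x, hxt⟩
  refine ⟨pick t, Set.mem_image_of_mem _ ht, hWU ?_⟩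
  have hpq : pick t = hex.choose := dif_pos hex
  have hg := hex.choose_spec
  show χ (x - pick t) ∈ W
  apply hball
  rw [map_sub, Metric.mem_ball, dist_zero_right, hpq]
  calc ‖χ x - χ hex.choose‖ = dist (χ x) (χ hex.choose) := (dist_eq_norm _ _).symm
  _ ≤ dist (χ x) t + dist t (χ hex.choose) := dist_triangle _ _ _
  _ < ε / 2 + ε / 2 := by
      refine add_lt_add (Metric.mem_ball.mp hxt) ?_
      rw [dist_comm]
      exact Metric.mem_ball.mp hg
  _ = ε := by ring

/-- Any character along which `u` tends to zero is `τ_u`-continuous. -/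
lemma continuous_of_char_tendsto_zero {G : Type*} [AddCommGroup G] {τ : TopologicalSpace G}
    {u : ℕ → G} (hτ : IsTauU u τ) (χ : G →+ Torus)
    (hu : Filter.Tendsto (fun n => χ (u n)) Filter.atTop (nhds 0)) :
    @Continuous G Torus τ _ χ := by
  set σ := TopologicalSpace.induced (χ : G → Torus) inferInstance with hσ
  have hgσ : @IsTopologicalAddGroup G σ _ := topologicalAddGroup_induced χ
  have h1 : IsPrecompactGroupTopology (τ ⊓ σ) := by
    refine ⟨⟨topologicalAddGroup_inf hτ.1.1.1 hgσ, ?_⟩,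
      precompactCover_inf hτ.1.1.1 hgσ hτ.1.2 (precompactCover_induced χ)⟩
    exact t2Space_antitone inf_le_left hτ.1.1.2
  have h2 : ConvergesToZero (τ ⊓ σ) u := by
    unfold ConvergesToZero
    rw [@nhds_inf G τ σ (0 : G), Filter.tendsto_inf]
    refine ⟨hτ.2.1, ?_⟩
    show Filter.Tendsto u Filter.atTop (@nhds G σ 0)
    rw [hσ, nhds_induced]
    rw [Filter.tendsto_comap_iff]
    have : (χ : G → Torus) ∘ u = fun n => χ (u n) := rfl
    rw [this, map_zero]
    exact hu
  have hle : τ ≤ σ := le_trans (hτ.2.2 _ h1 h2) inf_le_right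
  exact continuous_iff_le_induced.mpr hle

end Maximality

section CountableClosure

/-- The subgroup generated by a countable set is countable. -/
lemma countable_closure_of_countable {G : Type*} [AddCommGroup G] {s : Set G}
    (hs : s.Countable) : Countable (AddSubgroup.closure s) := by
  classical
  have hts : (s ∪ -s).Countable := by
    refine hs.union (Set.Countable.mono ?_ (hs.image fun x => -x))
    intro x hx
    exact ⟨-x, Set.mem_neg.mp hx, neg_neg x⟩
  haveI := hts.to_subtype
  have hmem : ∀ l : List (s ∪ -s : Set G), ((l.map Subtype.val).sum) ∈ AddSubgroup.closure s := by
    intro l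
    refine AddSubgroup.list_sum_mem _ ?_
    intro x hx
    rw [List.mem_map] at hx
    obtain ⟨y, _, rfl⟩ := hx
    rcases y.2 with h | h
    · exact AddSubgroup.subset_closure h
    · have : -(y : G) ∈ s := Set.mem_neg.mp h
      have := AddSubgroup.subset_closure this
      simpa using neg_mem this
  refine Function.Surjective.countable
    (f := fun l : List (s ∪ -s : Set G) =>
      (⟨(l.map Subtype.val).sum, hmem l⟩ : AddSubgroup.closure s)) ?_
  rintro ⟨x, hx⟩
  have hx' : x ∈ AddSubmonoid.closure (s ∪ -s) := by
    have h1 : x ∈ (AddSubgroup.closure s).toAddSubmonoid := hx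
    rwa [AddSubgroup.closure_toAddSubmonoid] at h1
  obtain ⟨l, hl, hsum⟩ := AddSubmonoid.exists_list_of_mem_closure hx'
  refine ⟨l.pmap (fun y h => (⟨y, h⟩ : (s ∪ -s : Set G))) hl, ?_⟩
  apply Subtype.ext
  show ((l.pmap (fun y h => (⟨y, h⟩ : (s ∪ -s : Set G))) hl).map Subtype.val).sum = x
  rw [List.map_pmap]
  simp only [List.pmap_eq_map, List.map_id']
  exact hsum

end CountableClosure

section FiniteDual

/-- If an abelian group has countably many characters then it has finitely many. -/
lemma finite_hom_torus_of_countable {A : Type*} [AddCommGroup A]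
    (h : Countable (A →+ Torus)) : Finite (A →+ Torus) := by
  classical
  set S : Set (A → Torus) := {f | ∀ a b, f (a + b) = f a + f b} with hS
  have hclosed : IsClosed S := by
    have : S = ⋂ (a : A) (b : A), {f : A → Torus | f (a + b) = f a + f b} := by
      ext f; simp [hS]
    rw [this]
    exact isClosed_iInter fun a => isClosed_iInter fun b =>
      isClosed_eq (continuous_apply _) ((continuous_apply a).add (continuous_apply b))
  haveI : CompactSpace S := isCompact_iff_compactSpace.mp hclosed.isCompact
  set e : (A →+ Torus) → S := fun χ => ⟨χ, fun a b => map_add χ a b⟩ with he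
  have hebij : Function.Bijective e := by
    constructor
    · intro χ ψ hh
      exact AddMonoidHom.ext fun a => congrFun (congrArg Subtype.val hh) a
    · rintro ⟨f, hf⟩
      exact ⟨AddMonoidHom.mk' f hf, rfl⟩
  haveI : Countable S := Countable.of_equiv _ (Equiv.ofBijective e hebij)
  haveI : Nonempty S := ⟨e 0⟩
  haveI : LocallyCompactSpace S := WeaklyLocallyCompactSpace.locallyCompactSpace
  haveI : BaireSpace S := BaireSpace.of_t2Space_locallyCompactSpace
  obtain ⟨f₀, hf₀⟩ := nonempty_interior_of_iUnion_of_closed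
    (f := fun f : S => ({f} : Set S)) (fun f => isClosed_singleton)
    (Set.iUnion_of_singleton S)
  have hopen₀ : IsOpen ({f₀} : Set S) := by
    have h1 : interior ({f₀} : Set S) = {f₀} := by
      refine Set.Subset.antisymm interior_subset ?_
      obtain ⟨x, hx⟩ := hf₀
      have hxe : x ∈ ({f₀} : Set S) := interior_subset hx
      rw [Set.mem_singleton_iff] at hxe
      rw [Set.singleton_subset_iff]
      rw [hxe] at hx
      exact hx
    rw [← h1]
    exact isOpen_interior
  have hdisc : ∀ g₀ : S, IsOpen ({g₀} : Set S) := by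
    intro g₀
    set T : S → S := fun f =>
      ⟨fun a => f.1 a - g₀.1 a + f₀.1 a, by
        intro a b
        show f.1 (a + b) - g₀.1 (a + b) + f₀.1 (a + b) =
          (f.1 a - g₀.1 a + f₀.1 a) + (f.1 b - g₀.1 b + f₀.1 b)
        rw [f.2 a b, g₀.2 a b, f₀.2 a b]
        abel⟩ with hT
    have hTcont : Continuous T := by
      apply Continuous.subtype_mk
      apply continuous_pi
      intro a
      exact (((continuous_apply a).comp continuous_subtype_val).sub continuous_const).add
        continuous_const
    have hset : ({g₀} : Set S) = T ⁻¹' {f₀} := by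
      ext f
      simp only [Set.mem_singleton_iff, Set.mem_preimage]
      constructor
      · intro hf
        rw [hf]
        apply Subtype.ext
        funext a
        show g₀.1 a - g₀.1 a + f₀.1 a = f₀.1 a
        abel
      · intro hTf
        apply Subtype.ext
        funext a
        have h1 : f.1 a - g₀.1 a + f₀.1 a = f₀.1 a := congrFun (congrArg Subtype.val hTf) a
        have h2 : f.1 a - g₀.1 a = 0 := add_eq_right.mp h1
        exact sub_eq_zero.mp h2
    rw [hset]
    exact hTcont.isOpen_preimage _ hopen₀
  haveI : DiscreteTopology S := discreteTopology_iff_isOpen_singleton.mpr hdisc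
  haveI : Finite S := finite_of_compact_of_discrete
  exact Finite.of_injective e hebij.1

/-- The natural injection of the rational circle into the real circle. -/
noncomputable def ratCircleToTorus : AddCircle (1 : ℚ) →+ Torus :=
  QuotientAddGroup.map (AddSubgroup.zmultiples (1 : ℚ)) (AddSubgroup.zmultiples (1 : ℝ))
    (AddMonoidHom.mk' (fun q : ℚ => (q : ℝ)) (by intro a b; push_cast; ring))
    (by
      intro x hx
      obtain ⟨n, hn⟩ := AddSubgroup.mem_zmultiples_iff.mp hx
      refine AddSubgroup.mem_comap.mpr (AddSubgroup.mem_zmultiples_iff.mpr ⟨n, ?_⟩)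
      simp only [AddMonoidHom.mk'_apply]
      rw [← hn]
      simp only [zsmul_one]
      norm_cast)

lemma ratCircleToTorus_coe (q : ℚ) :
    ratCircleToTorus ((q : ℚ) : AddCircle (1 : ℚ)) = (((q : ℝ)) : Torus) :=
  rfl

lemma ratCircleToTorus_injective : Function.Injective ratCircleToTorus := by
  rw [injective_iff_map_eq_zero]
  intro x hx
  induction x using QuotientAddGroup.induction_on with
  | H q =>
    have h1 : (((q : ℝ)) : Torus) = 0 := hx
    obtain ⟨n, hn⟩ := (AddCircle.coe_eq_zero_iff 1).mp h1
    refine (AddCircle.coe_eq_zero_iff 1).mpr ⟨n, ?_⟩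
    have : ((n • (1 : ℚ) : ℚ) : ℝ) = ((q : ℝ)) := by
      rw [← hn]; simp only [zsmul_one]; norm_cast
    exact_mod_cast this

/-- Transfer of finiteness from `Torus`-characters to rational characters. -/
lemma finite_characterModule {A : Type*} [AddCommGroup A] (h : Finite (A →+ Torus)) :
    Finite (CharacterModule A) := by
  refine Finite.of_injective
    (fun c : CharacterModule A => ratCircleToTorus.comp (show A →+ AddCircle (1 : ℚ) from c)) ?_
  intro c c' hcc
  apply DFunLike.ext
  intro a
  have := DFunLike.congr_fun hcc a
  exact ratCircleToTorus_injective this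

lemma addCircle_rat_coe_injOn :
    ∀ x y : ℚ, 0 ≤ x → x < 1 → 0 ≤ y → y < 1 →
      ((x : AddCircle (1 : ℚ)) = (y : AddCircle (1 : ℚ))) → x = y := by
  intro x y hx0 hx1 hy0 hy1 hxy
  have h0 : ((x - y : ℚ) : AddCircle (1 : ℚ)) = 0 := by
    rw [AddCircle.coe_sub, hxy, sub_self]
  obtain ⟨n, hn⟩ := (AddCircle.coe_eq_zero_iff 1).mp h0
  have hn' : x - y = (n : ℚ) := by rw [← hn]; simp [zsmul_one]
  have hb : |x - y| < 1 := abs_lt.mpr ⟨by linarith, by linarith⟩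
  rw [hn'] at hb
  have : n = 0 := by
    obtain ⟨hb1, hb2⟩ := abs_lt.mp hb
    have h1 : (-1 : ℤ) < n := by exact_mod_cast hb1
    have h2 : n < (1 : ℤ) := by exact_mod_cast hb2
    omega
  rw [this] at hn'
  have : x - y = 0 := by rw [hn']; norm_num
  linarith

/-- Every element of a group with finitely many characters has finite order. -/
lemma addOrderOf_pos_of_finite_char {A : Type*} [AddCommGroup A]
    [hch : Finite (CharacterModule A)] (a : A) : 0 < addOrderOf a := by
  rcases Nat.eq_zero_or_pos (addOrderOf a) with h0 | h
  · exfalso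
    have hnotfin : ¬IsOfFinAddOrder a := addOrderOf_eq_zero_iff.mp h0
    have hinj : Function.Injective (LinearMap.toSpanSingleton ℤ A a) := by
      rw [injective_iff_map_eq_zero]
      intro m hm
      by_contra hm0
      exact hnotfin (isOfFinAddOrder_iff_zsmul_eq_zero.mpr ⟨m, hm0, by
        rw [LinearMap.toSpanSingleton_apply] at hm
        exact hm⟩)
    have hsurj := CharacterModule.dual_surjective_of_injective _ hinj
    haveI : Finite (CharacterModule ℤ) := Finite.of_surjective _ hsurj
    have hinjN : Function.Injective
        (fun n : ℕ => (CharacterModule.int.divByNat (n + 2) : CharacterModule ℤ)) := by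
      intro n k hnk
      have h1 := DFunLike.congr_fun hnk (1 : ℤ)
      have he : ∀ m : ℕ, (CharacterModule.int.divByNat m) (1 : ℤ)
          = (((m : ℚ)⁻¹ : ℚ) : AddCircle (1 : ℚ)) := by
        intro m
        show (LinearMap.toSpanSingleton ℤ _ (((m : ℚ)⁻¹ : ℚ) : AddCircle (1 : ℚ))) 1 = _
        rw [LinearMap.toSpanSingleton_apply_one]
      rw [he, he] at h1
      have hres := addCircle_rat_coe_injOn ((n + 2 : ℕ) : ℚ)⁻¹ ((k + 2 : ℕ) : ℚ)⁻¹
        (by positivity)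
        (by
          rw [inv_lt_one_iff₀]
          right
          exact_mod_cast by omega)
        (by positivity)
        (by
          rw [inv_lt_one_iff₀]
          right
          exact_mod_cast by omega)
        h1
      have hcast : ((n + 2 : ℕ) : ℚ) = ((k + 2 : ℕ) : ℚ) := inv_inj.mp hres
      have : n + 2 = k + 2 := by exact_mod_cast hcast
      omega
    haveI : Infinite (CharacterModule ℤ) := Infinite.of_injective _ hinjN
    exact not_finite (CharacterModule ℤ)
  · exact h

/-- In a group with finitely many characters, all orders are bounded by the number
of characters. -/
lemma addOrderOf_le_card_of_finite_char {A : Type*} [AddCommGroup A]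
    [hch : Finite (CharacterModule A)] (a : A) :
    addOrderOf a ≤ Nat.card (CharacterModule A) := by
  classical
  set n := addOrderOf a with hn
  have hnpos : 0 < n := addOrderOf_pos_of_finite_char a
  -- characters on the cyclic subgroup generated by `a`
  have hsurj := CharacterModule.dual_surjective_of_injective _
    (Submodule.injective_subtype (Submodule.span ℤ {a} : Submodule ℤ A))
  -- for each k < n, the character sending `a` to `k/n`
  have hvz : ∀ k : Fin n, ((n : ℤ)) • (((k : ℚ) / (n : ℚ) : ℚ) : AddCircle (1 : ℚ)) = 0 := by
    intro k
    rw [← AddCircle.coe_zsmul]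
    refine (AddCircle.coe_eq_zero_iff 1).mpr ⟨(k : ℤ), ?_⟩
    have hn0 : (n : ℚ) ≠ 0 := by positivity
    simp only [zsmul_one]
    push_cast
    rw [zsmul_eq_mul]
    push_cast
    field_simp
  have hvz' : ∀ k : Fin n,
      (LinearMap.toSpanSingleton ℤ (AddCircle (1 : ℚ))
        (((k : ℚ) / (n : ℚ) : ℚ) : AddCircle (1 : ℚ))) ((addOrderOf a : ℤ)) = 0 := by
    intro k
    rw [LinearMap.toSpanSingleton_apply, ← hn]
    exact hvz k
  set d : Fin n → CharacterModule (Submodule.span ℤ {a} : Submodule ℤ A) := fun k =>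
    ((Submodule.liftQSpanSingleton ((addOrderOf a : ℤ))
      (LinearMap.toSpanSingleton ℤ (AddCircle (1 : ℚ))
        (((k : ℚ) / (n : ℚ) : ℚ) : AddCircle (1 : ℚ))) (hvz' k)).comp
      (CharacterModule.intSpanEquivQuotAddOrderOf a).toLinearMap).toAddMonoidHom with hd
  have hdval : ∀ k : Fin n,
      d k ⟨a, Submodule.mem_span_singleton_self a⟩ = (((k : ℚ) / (n : ℚ) : ℚ) : AddCircle (1 : ℚ)) := by
    intro k
    show (Submodule.liftQSpanSingleton ((addOrderOf a : ℤ))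
      (LinearMap.toSpanSingleton ℤ (AddCircle (1 : ℚ))
        (((k : ℚ) / (n : ℚ) : ℚ) : AddCircle (1 : ℚ))) (hvz' k))
      ((CharacterModule.intSpanEquivQuotAddOrderOf a)
        ⟨a, Submodule.mem_span_singleton_self a⟩) = _
    rw [CharacterModule.intSpanEquivQuotAddOrderOf_apply_self]
    show (1 : ℤ) • (((k : ℚ) / (n : ℚ) : ℚ) : AddCircle (1 : ℚ)) = _
    rw [one_smul]
  set Φ : Fin n → CharacterModule A := fun k => (hsurj (d k)).choose with hΦ
  have hΦspec : ∀ k, CharacterModule.dual _ (Φ k) = d k := fun k => (hsurj (d k)).choose_spec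
  have hΦinj : Function.Injective Φ := by
    intro k k' hkk
    have h1 : d k = d k' := by rw [← hΦspec k, ← hΦspec k', hkk]
    have h2 := DFunLike.congr_fun h1 ⟨a, Submodule.mem_span_singleton_self a⟩
    rw [hdval k, hdval k'] at h2
    have hn0 : (0 : ℚ) < (n : ℚ) := by exact_mod_cast hnpos
    have hres := addCircle_rat_coe_injOn ((k : ℚ) / (n : ℚ)) ((k' : ℚ) / (n : ℚ))
      (by positivity)
      (by
        rw [div_lt_one hn0]
        exact_mod_cast k.2)
      (by positivity)
      (by
        rw [div_lt_one hn0]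
        exact_mod_cast k'.2)
      h2
    have hfinal : ((k : ℕ) : ℚ) = ((k' : ℕ) : ℚ) := by
      field_simp at hres
      exact_mod_cast hres
    exact Fin.ext (by exact_mod_cast hfinal)
  calc n = Nat.card (Fin n) := by simp
  _ ≤ Nat.card (CharacterModule A) := Nat.card_le_card_of_injective Φ hΦinj

/-- An abelian group with finitely many `Torus`-characters is finite. -/
lemma finite_of_finite_char {A : Type*} [AddCommGroup A]
    (hfin : Finite (A →+ Torus)) : Finite A := by
  classical
  haveI hch : Finite (CharacterModule A) := finite_characterModule hfin
  set m := Nat.card (CharacterModule A) with hm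
  have hmpos : 0 < m := Nat.card_pos
  set N := m.factorial with hN
  have hNpos : 0 < N := Nat.factorial_pos m
  have hNa : ∀ a : A, N • a = 0 := by
    intro a
    have h1 : addOrderOf a ∣ N :=
      Nat.dvd_factorial (addOrderOf_pos_of_finite_char a) (addOrderOf_le_card_of_finite_char a)
    exact addOrderOf_dvd_iff_nsmul_eq_zero.mp h1
  -- the N-torsion of the circle is finite
  set TN : Set Torus := {t : Torus | N • t = 0} with hTN
  have hTNfin : TN.Finite := by
    have hsub : TN ⊆ (fun k : Fin N => ((((k : ℕ) : ℝ) / (N : ℝ) : ℝ) : Torus)) '' Set.univ := by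
      intro t ht
      obtain ⟨r, hr, rfl⟩ := AddCircle.eq_coe_Ico t
      have h1 : ((N • r : ℝ) : Torus) = 0 := by
        rw [AddCircle.coe_nsmul]
        exact ht
      obtain ⟨z, hz⟩ := (AddCircle.coe_eq_zero_iff 1).mp h1
      have hz' : (N : ℝ) * r = (z : ℝ) := by
        rw [zsmul_one, nsmul_eq_mul] at hz
        rw [← hz]
      have hz0 : 0 ≤ z := by
        have : (0 : ℝ) ≤ (z : ℝ) := by
          rw [← hz']
          exact mul_nonneg (by positivity) hr.1
        exact_mod_cast this
      have hzN : z < (N : ℤ) := by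
        have hNr : (N : ℝ) * r < (N : ℝ) := by
          have := hr.2
          have hN0 : (0 : ℝ) < (N : ℝ) := by exact_mod_cast hNpos
          nlinarith
        have : (z : ℝ) < (N : ℝ) := by rw [← hz']; exact hNr
        exact_mod_cast this
      refine ⟨⟨z.toNat, ?_⟩, Set.mem_univ _, ?_⟩
      · have h2 : (z.toNat : ℤ) < (N : ℤ) := by rwa [Int.toNat_of_nonneg hz0]
        exact_mod_cast h2
      · have hzr : ((z.toNat : ℕ) : ℝ) = (z : ℝ) := by
          have h := Int.toNat_of_nonneg hz0
          exact_mod_cast h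
        have hN0 : (N : ℝ) ≠ 0 := by positivity
        have hr' : r = ((z.toNat : ℕ) : ℝ) / (N : ℝ) := by
          rw [hzr, eq_div_iff hN0, mul_comm]
          exact hz'
        rw [hr']
    exact Set.Finite.subset (Set.finite_univ.image _) hsub
  -- embedding of A into a finite type
  haveI := hfin
  haveI := hTNfin.to_subtype
  set e : A → ((A →+ Torus) → TN) := fun a χ =>
    ⟨χ a, by
      show N • χ a = 0
      rw [← map_nsmul, hNa, map_zero]⟩ with he
  have hinj : Function.Injective e := by
    intro a b hab
    by_contra hne
    have hsubne : a - b ≠ 0 := sub_ne_zero.mpr hne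
    obtain ⟨c, hc⟩ := CharacterModule.exists_character_apply_ne_zero_of_ne_zero hsubne
    set χ : A →+ Torus := ratCircleToTorus.comp (show A →+ AddCircle (1 : ℚ) from c) with hχ
    have h1 : χ a = χ b := congrArg Subtype.val (congrFun hab χ)
    have h2 : χ (a - b) = 0 := by rw [map_sub, h1, sub_self]
    have h3 : ratCircleToTorus (c (a - b)) = ratCircleToTorus 0 := by
      rw [map_zero]
      exact h2
    exact hc (ratCircleToTorus_injective h3)
  exact Finite.of_injective e hinj

end FiniteDual

/-- A metrizable precompact Hausdorff abelian group which is
ss-characterized is countable. -/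
theorem stmt1 {G : Type*} [AddCommGroup G] (τ : TopologicalSpace G)
    (hpre : IsPrecompactGroupTopology τ) (hmet : @TopologicalSpace.MetrizableSpace G τ)
    (hss : SSCharacterized τ) : Countable G := by
  classical
  obtain ⟨u, hτu⟩ := hss
  letI := τ
  haveI hg : IsTopologicalAddGroup G := hpre.1.1
  haveI ht2 : T2Space G := hpre.1.2
  haveI := hmet
  -- the set of continuous characters is countable
  haveI hdual : Countable {χ : G →+ Torus // Continuous χ} := countable_continuousChars hpre.2
  -- the countable subgroup generated by the sequence
  set S := AddSubgroup.closure (Set.range u) with hS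
  haveI hScount : Countable S := countable_closure_of_countable (Set.countable_range u)
  -- every character of the quotient by `S` yields a continuous character of `G`
  have hcont : ∀ ψ : (G ⧸ S) →+ Torus, Continuous (ψ.comp (QuotientAddGroup.mk' S)) := by
    intro ψ
    refine continuous_of_char_tendsto_zero hτu _ ?_
    have hzero : ∀ n : ℕ, (ψ.comp (QuotientAddGroup.mk' S)) (u n) = 0 := by
      intro n
      have hmem : u n ∈ S := AddSubgroup.subset_closure (Set.mem_range_self n)
      have : (QuotientAddGroup.mk' S) (u n) = 0 := (QuotientAddGroup.eq_zero_iff (u n)).mpr hmem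
      rw [AddMonoidHom.comp_apply, this, map_zero]
    have : (fun n => (ψ.comp (QuotientAddGroup.mk' S)) (u n)) = fun _ => (0 : Torus) :=
      funext hzero
    rw [this]
    exact tendsto_const_nhds
  -- hence the quotient has countably many characters
  haveI hQc : Countable ((G ⧸ S) →+ Torus) := by
    refine Function.Injective.countable
      (f := fun ψ : (G ⧸ S) →+ Torus =>
        (⟨ψ.comp (QuotientAddGroup.mk' S), hcont ψ⟩ : {χ : G →+ Torus // Continuous χ})) ?_
    intro ψ₁ ψ₂ hh
    have h1 : ψ₁.comp (QuotientAddGroup.mk' S) = ψ₂.comp (QuotientAddGroup.mk' S) :=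
      congrArg Subtype.val hh
    apply AddMonoidHom.ext
    intro q
    obtain ⟨x, rfl⟩ := QuotientAddGroup.mk'_surjective S q
    exact DFunLike.congr_fun h1 x
  -- so the quotient is finite, hence countable
  haveI hQfin : Finite (G ⧸ S) := finite_of_finite_char (finite_hom_torus_of_countable hQc)
  exact Countable.of_equiv _ (AddSubgroup.addGroupEquivQuotientProdAddSubgroup (s := S)).symm

end SSChar
end
end

section
/- Let (G,τ) be a metrizable precompact Hausdorff abelian group and let u = (u_n) be a TB-sequence in G with τ = τ_u. Then the subgroup ⟨u⟩ of G generated by the terms of u has finite index in G. -/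
open Filter Topology

noncomputable section

namespace SSChar

variable {G : Type*}

section AuxSSChar

lemma torus_norm_coe_of_abs_le {s : ℝ} (h : |s| ≤ 1/2) : ‖(s : Torus)‖ = |s| :=
  (AddCircle.norm_coe_eq_abs_iff (p := (1:ℝ)) one_ne_zero).mpr (by simpa using h)

lemma torus_norm_add_self {y : Torus} (h : ‖y‖ ≤ 1/4) : ‖y + y‖ = 2 * ‖y‖ := by
  induction y using QuotientAddGroup.induction_on with
  | H t =>
    have hz : (((round t : ℝ)) : Torus) = 0 :=
      (AddCircle.coe_eq_zero_iff _).mpr ⟨round t, by simp⟩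
    have hcoe : ((t - round t : ℝ) : Torus) = (t : Torus) := by
      have : t - (round t : ℝ) + (round t : ℝ) = t := by ring
      calc ((t - round t : ℝ) : Torus) = ((t - round t : ℝ) : Torus) + (((round t : ℝ)) : Torus) := by
            rw [hz, add_zero]
        _ = (((t - round t + round t : ℝ)) : Torus) := by rw [AddCircle.coe_add]
        _ = (t : Torus) := by rw [this]
    have habs : |t - round t| ≤ 1/2 := abs_sub_round t
    have h1 : ‖(t : Torus)‖ = |t - round t| := by
      rw [← hcoe]; exact torus_norm_coe_of_abs_le habs
    have h4 : |t - round t| ≤ 1/4 := by rw [← h1]; exact h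
    have hsum : (t : Torus) + (t : Torus) = (((t - round t) + (t - round t) : ℝ) : Torus) := by
      rw [← hcoe, ← AddCircle.coe_add]
    rw [hsum, h1]
    have : |(t - round t) + (t - round t)| = 2 * |t - round t| := by
      rw [← two_mul, abs_mul]; norm_num
    rw [torus_norm_coe_of_abs_le (by rw [this]; linarith), this]

lemma hom_eq_zero_of_norm_le {Q : Type*} [AddCommGroup Q] (δ : Q →+ Torus)
    (h : ∀ x, ‖δ x‖ ≤ 3/16) : δ = 0 := by
  ext x
  have key : ∀ j : ℕ, ‖δ ((2^j : ℕ) • x)‖ = 2^j * ‖δ x‖ := by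
    intro j; induction j with
    | zero => simp
    | succ j ih =>
      have h2 : ((2^(j+1) : ℕ)) • x = (2^j : ℕ) • x + (2^j : ℕ) • x := by
        rw [← add_nsmul]; ring_nf
      rw [h2, map_add, torus_norm_add_self (le_trans (h _) (by norm_num)), ih, pow_succ]
      ring
  show δ x = 0
  by_contra hne
  have hpos : 0 < ‖δ x‖ := norm_pos_iff.mpr hne
  obtain ⟨j, hj⟩ := pow_unbounded_of_one_lt ((3/16) / ‖δ x‖) (one_lt_two (α := ℝ))
  have hb := h ((2^j : ℕ) • x)
  rw [key j] at hb
  have : (3/16 : ℝ) < 2^j * ‖δ x‖ := by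
    rw [div_lt_iff₀ hpos] at hj; linarith
  linarith


lemma polar_finite [AddCommGroup G] (τ : TopologicalSpace G) (hpc : PrecompactCover τ)
    {U : Set G} (hU : U ∈ @nhds G τ 0) :
    {χ : G →+ Torus | ∀ x ∈ U, ‖χ x‖ ≤ 1/16}.Finite := by
  haveI : Fact ((0:ℝ) < 1) := ⟨one_pos⟩
  obtain ⟨F, hFfin, hF⟩ := hpc U hU
  set P := {χ : G →+ Torus | ∀ x ∈ U, ‖χ x‖ ≤ 1/16} with hP
  have claim : ∀ χ ∈ P, ∀ ψ ∈ P, (∀ f ∈ F, dist (χ f) (ψ f) ≤ 1/16) → χ = ψ := by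
    intro χ hχ ψ hψ hclose
    have hδ : ∀ x : G, ‖(χ - ψ) x‖ ≤ 3/16 := by
      intro x
      obtain ⟨f, hfF, hfU⟩ := hF x
      have hx : (χ - ψ) x = (χ (x - f) - ψ (x - f)) + (χ f - ψ f) := by
        simp only [AddMonoidHom.sub_apply, map_sub]
        abel
      rw [hx]
      have h1 := hχ _ hfU
      have h2 := hψ _ hfU
      have h3 := hclose f hfF
      rw [dist_eq_norm] at h3
      calc ‖(χ (x - f) - ψ (x - f)) + (χ f - ψ f)‖
          ≤ ‖χ (x - f) - ψ (x - f)‖ + ‖χ f - ψ f‖ := norm_add_le _ _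
        _ ≤ (‖χ (x - f)‖ + ‖ψ (x - f)‖) + ‖χ f - ψ f‖ := by
            have := norm_sub_le (χ (x - f)) (ψ (x - f)); linarith
        _ ≤ (1/16 + 1/16) + 1/16 := by linarith
        _ = 3/16 := by norm_num
    have := hom_eq_zero_of_norm_le (χ - ψ) hδ
    exact sub_eq_zero.mp this
  rw [← Set.not_infinite]
  intro hinf
  haveI := hFfin.fintype
  set r : (G →+ Torus) → (↥F → Torus) := fun χ f => χ f.1 with hr
  have hrinj : Set.InjOn r P := by
    intro χ hχ ψ hψ hrr
    refine claim χ hχ ψ hψ fun f hf => ?_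
    have : r χ ⟨f, hf⟩ = r ψ ⟨f, hf⟩ := by rw [hrr]
    simp only [hr] at this
    rw [this, dist_self]
    norm_num
  have himg : (r '' P).Infinite := Set.Infinite.image hrinj hinf
  have htb : TotallyBounded (Set.univ : Set (↥F → Torus)) := isCompact_univ.totallyBounded
  obtain ⟨C, hCfin, hCcov⟩ := Metric.totallyBounded_iff.mp htb (1/32) (by norm_num)
  have hexists : ∃ c ∈ C, ((r '' P) ∩ Metric.ball c (1/32)).Infinite := by
    by_contra hall
    push_neg at hall
    have hsub : (r '' P) ⊆ ⋃ c ∈ C, ((r '' P) ∩ Metric.ball c (1/32)) := by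
      intro y hy
      have := hCcov (Set.mem_univ y)
      obtain ⟨c, hc, hyc⟩ := Set.mem_iUnion₂.mp this
      exact Set.mem_iUnion₂.mpr ⟨c, hc, hy, hyc⟩
    exact himg (Set.Finite.subset (Set.Finite.biUnion hCfin hall) hsub)
  obtain ⟨c, hc, hball⟩ := hexists
  obtain ⟨y, hy, z, hz, hyz⟩ := hball.nontrivial
  obtain ⟨χ, hχP, rfl⟩ := hy.1
  obtain ⟨ψ, hψP, hψz⟩ := hz.1
  have heq : χ = ψ := by
    refine claim χ hχP ψ hψP fun f hf => ?_
    have hd : dist (r χ) (r ψ) < 1/16 := by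
      calc dist (r χ) (r ψ) ≤ dist (r χ) c + dist (r ψ) c := dist_triangle_right _ _ _
        _ < 1/32 + 1/32 := by
            have h1 : dist (r χ) c < 1/32 := hy.2
            have h2 : dist (r ψ) c < 1/32 := by rw [hψz]; exact hz.2
            linarith
        _ = 1/16 := by norm_num
    calc dist (χ f) (ψ f) = dist (r χ ⟨f, hf⟩) (r ψ ⟨f, hf⟩) := rfl
      _ ≤ dist (r χ) (r ψ) := dist_le_pi_dist _ _ _
      _ ≤ 1/16 := le_of_lt hd
  exact hyz (by rw [← hψz, heq])

lemma dual_countable [AddCommGroup G] (τ : TopologicalSpace G)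
    (hg : @IsTopologicalAddGroup G τ _) (hpc : PrecompactCover τ)
    (hmet : @TopologicalSpace.MetrizableSpace G τ) :
    {χ : G →+ Torus | @Continuous G Torus τ _ ⇑χ}.Countable := by
  letI := τ
  haveI := hmet
  obtain ⟨U, hU⟩ := (𝓝 (0:G)).exists_antitone_basis
  have hsub : {χ : G →+ Torus | Continuous ⇑χ} ⊆
      ⋃ n, {χ : G →+ Torus | ∀ x ∈ U n, ‖χ x‖ ≤ 1/16} := by
    intro χ hχ
    have hball : Metric.closedBall (0:Torus) (1/16) ∈ 𝓝 (χ 0) := by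
      rw [map_zero]; exact Metric.closedBall_mem_nhds _ (by norm_num)
    have hpre : ⇑χ ⁻¹' Metric.closedBall 0 (1/16) ∈ 𝓝 (0:G) :=
      hχ.continuousAt.preimage_mem_nhds hball
    obtain ⟨n, hn⟩ := hU.mem_iff.mp hpre
    refine Set.mem_iUnion.mpr ⟨n, fun x hx => ?_⟩
    have := hn hx
    simpa [Metric.mem_closedBall, dist_zero_right] using this
  refine Set.Countable.mono hsub (Set.countable_iUnion fun n => ?_)
  exact (polar_finite τ hpc (hU.mem n)).countable


lemma precompactCover_inf_induced [AddCommGroup G] (τ : TopologicalSpace G)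
    (hg : @IsTopologicalAddGroup G τ _) (hpc : PrecompactCover τ) (φ : G →+ Torus) :
    PrecompactCover (τ ⊓ TopologicalSpace.induced ⇑φ inferInstance) := by
  haveI : Fact ((0:ℝ) < 1) := ⟨one_pos⟩
  letI := τ
  intro W hW
  rw [_root_.nhds_inf (a := (0:G)), nhds_induced, map_zero] at hW
  obtain ⟨A, hA, B, hB, hABW⟩ := Filter.mem_inf_iff_superset.mp hW
  obtain ⟨V, hV, hVB⟩ := Filter.mem_comap.mp hB
  obtain ⟨ε, hε, hballV⟩ := Metric.mem_nhds_iff.mp hV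
  obtain ⟨V₀, hV₀, hV₀A⟩ := exists_nhds_zero_half hA
  have hnegV₀ : (fun x : G => -x) ⁻¹' V₀ ∈ 𝓝 (0:G) := by
    have : Filter.Tendsto (fun x : G => -x) (𝓝 0) (𝓝 0) := by
      simpa using (continuous_neg (G := G)).tendsto (0 : G)
    exact this hV₀
  set U₁ := V₀ ∩ (fun x : G => -x) ⁻¹' V₀ with hU₁def
  have hU₁ : U₁ ∈ 𝓝 (0:G) := Filter.inter_mem hV₀ hnegV₀
  have hU₁sub : ∀ a ∈ U₁, ∀ b ∈ U₁, a - b ∈ A := fun a ha b hb => by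
    rw [sub_eq_add_neg]; exact hV₀A a ha.1 (-b) hb.2
  obtain ⟨F₁, hF₁fin, hF₁⟩ := hpc U₁ hU₁
  obtain ⟨C, hCfin, hCcov⟩ :=
    Metric.totallyBounded_iff.mp (isCompact_univ (X := Torus)).totallyBounded (ε/2) (half_pos hε)
  have hsel : ∀ pr : G × Torus, ∃ g : G,
      ({x : G | x - pr.1 ∈ U₁ ∧ φ x ∈ Metric.ball pr.2 (ε/2)}).Nonempty →
      g - pr.1 ∈ U₁ ∧ φ g ∈ Metric.ball pr.2 (ε/2) := by
    intro pr
    by_cases h : ({x : G | x - pr.1 ∈ U₁ ∧ φ x ∈ Metric.ball pr.2 (ε/2)}).Nonempty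
    · exact ⟨h.choose, fun _ => h.choose_spec⟩
    · exact ⟨0, fun hn => absurd hn h⟩
  choose g hg' using hsel
  refine ⟨g '' (F₁ ×ˢ C), (hF₁fin.prod hCfin).image g, fun x => ?_⟩
  obtain ⟨f, hfF, hfU⟩ := hF₁ x
  have hx : φ x ∈ ⋃ c ∈ C, Metric.ball c (ε/2) := hCcov (Set.mem_univ _)
  obtain ⟨c, hcC, hxc⟩ := Set.mem_iUnion₂.mp hx
  have hne : ({y : G | y - (f, c).1 ∈ U₁ ∧ φ y ∈ Metric.ball (f, c).2 (ε/2)}).Nonempty :=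
    ⟨x, hfU, hxc⟩
  obtain ⟨hg1, hg2⟩ := hg' (f, c) hne
  refine ⟨g (f, c), Set.mem_image_of_mem g (Set.mem_prod.mpr ⟨hfF, hcC⟩), hABW ⟨?_, ?_⟩⟩
  · have := hU₁sub _ hfU _ hg1
    rwa [sub_sub_sub_cancel_right] at this
  · apply hVB
    show φ (x - g (f, c)) ∈ V
    apply hballV
    have hd : dist (φ x) (φ (g (f, c))) < ε := by
      calc dist (φ x) (φ (g (f, c))) ≤ dist (φ x) c + dist (φ (g (f, c))) c :=
            dist_triangle_right _ _ _
        _ < ε/2 + ε/2 := add_lt_add hxc hg2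
        _ = ε := add_halves ε
    rw [map_sub, Metric.mem_ball, dist_zero_right]
    rwa [← dist_eq_norm]


lemma torus_sep {Q : Type*} [AddCommGroup Q] (q : Q) (hq : q ≠ 0) :
    ∃ ψ : Q →+ Torus, ψ q ≠ 0 := by
  obtain ⟨c, hc⟩ := CharacterModule.exists_character_apply_ne_zero_of_ne_zero hq
  set cast : ℚ →+ ℝ := AddMonoidHom.mk' (fun x => (x : ℝ)) (by intro a b; push_cast; ring) with hcast
  have hle : AddSubgroup.zmultiples (1:ℚ) ≤ (AddSubgroup.zmultiples (1:ℝ)).comap cast := by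
    intro x hx
    obtain ⟨k, hk⟩ := AddSubgroup.mem_zmultiples_iff.mp hx
    refine AddSubgroup.mem_comap.mpr (AddSubgroup.mem_zmultiples_iff.mpr ⟨k, ?_⟩)
    rw [← hk]
    simp [hcast, zsmul_eq_mul]
  set j : AddCircle (1:ℚ) →+ Torus := QuotientAddGroup.map _ _ cast hle with hj
  have hjinj : ∀ y : AddCircle (1:ℚ), j y = 0 → y = 0 := by
    intro y
    induction y using QuotientAddGroup.induction_on with
    | H x =>
      intro hx
      rw [hj, QuotientAddGroup.map_mk] at hx
      obtain ⟨k, hk⟩ := (AddCircle.coe_eq_zero_iff _).mp hx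
      refine (AddCircle.coe_eq_zero_iff _).mpr ⟨k, ?_⟩
      have hcx : (cast x : ℝ) = (x : ℝ) := rfl
      rw [hcx] at hk
      rw [zsmul_eq_mul, mul_one] at hk ⊢
      exact_mod_cast hk
  refine ⟨AddMonoidHom.mk' (fun a => j (c a)) (fun a b => by
    show j (c (a + b)) = j (c a) + j (c b)
    rw [map_add, map_add]), fun h0 => hc ?_⟩
  have : j (c q) = 0 := h0
  have := hjinj _ this
  exact this

lemma finite_of_countable_dual (Q : Type*) [AddCommGroup Q]
    (h : Countable (Q →+ Torus)) : Finite Q := by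
  classical
  haveI : Fact ((0:ℝ) < 1) := ⟨one_pos⟩
  set S : Set (Q → Torus) := {f | ∀ a b : Q, f (a + b) = f a + f b} with hS
  have hmem : ∀ ψ : Q →+ Torus, ⇑ψ ∈ S := fun ψ a b => map_add ψ a b
  have hback : ∀ f ∈ S, ∃ ψ : Q →+ Torus, ⇑ψ = f := fun f hf => ⟨AddMonoidHom.mk' f hf, rfl⟩
  have hclosed : IsClosed S := by
    have hSeq : S = ⋂ (a : Q) (b : Q), {f : Q → Torus | f (a + b) = f a + f b} := by
      ext f; simp [hS, Set.mem_iInter]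
    rw [hSeq]
    exact isClosed_iInter fun a => isClosed_iInter fun b =>
      isClosed_eq (continuous_apply (a + b)) ((continuous_apply a).add (continuous_apply b))
  haveI : CompactSpace ↥S := isCompact_iff_compactSpace.mp hclosed.isCompact
  haveI : Countable ↥S := by
    have hinj : Function.Injective (fun f : ↥S => AddMonoidHom.mk' f.1 f.2) := by
      intro f g hfg
      apply Subtype.ext
      have := congrArg (fun ψ : Q →+ Torus => ⇑ψ) hfg
      simpa using this
    exact hinj.countable
  haveI : Nonempty ↥S := ⟨⟨⇑(0 : Q →+ Torus), hmem 0⟩⟩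
  haveI : BaireSpace ↥S := BaireSpace.of_t2Space_locallyCompactSpace
  have hopen : ∃ χ₀ : ↥S, IsOpen ({χ₀} : Set ↥S) := by
    obtain ⟨χ₀, hne⟩ := nonempty_interior_of_iUnion_of_closed (f := fun χ : ↥S => {χ})
      (fun χ => isClosed_singleton) (by ext x; simp)
    refine ⟨χ₀, ?_⟩
    have h1 : interior ({χ₀} : Set ↥S) = {χ₀} := by
      refine Set.Subset.antisymm interior_subset ?_
      obtain ⟨y, hy⟩ := hne
      have hyy : y = χ₀ := by simpa using (interior_subset hy : y ∈ ({χ₀} : Set ↥S))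
      rw [hyy] at hy
      exact Set.singleton_subset_iff.mpr hy
    rw [← h1]; exact isOpen_interior
  obtain ⟨χ₀, hχ₀⟩ := hopen
  obtain ⟨ψ₀, hψ₀⟩ := hback _ χ₀.2
  have hall : ∀ χ : ↥S, IsOpen ({χ} : Set ↥S) := by
    intro χ
    obtain ⟨ψ, hψ⟩ := hback _ χ.2
    set c : Q →+ Torus := ψ - ψ₀ with hc
    have hm : ∀ f : ↥S, f.1 - ⇑c ∈ S := by
      intro f
      obtain ⟨η, hη⟩ := hback _ f.2
      rw [← hη]
      have : ⇑η - ⇑c = ⇑(η - c) := by ext q; simp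
      rw [this]
      exact hmem (η - c)
    have hcont : Continuous (fun f : ↥S => (⟨f.1 - ⇑c, hm f⟩ : ↥S)) :=
      Continuous.subtype_mk (continuous_subtype_val.sub continuous_const) _
    have hχval : χ.1 - ⇑c = χ₀.1 := by
      rw [← hψ, ← hψ₀, hc]; ext q; simp
    have hpre : (fun f : ↥S => (⟨f.1 - ⇑c, hm f⟩ : ↥S)) ⁻¹' {χ₀} = {χ} := by
      ext f
      simp only [Set.mem_preimage, Set.mem_singleton_iff]
      constructor
      · intro hf
        have hfval : f.1 - ⇑c = χ₀.1 := congrArg Subtype.val hf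
        apply Subtype.ext
        have : f.1 - ⇑c = χ.1 - ⇑c := by rw [hfval, hχval]
        funext q
        have := congrFun this q
        simp only [Pi.sub_apply] at this
        exact sub_left_injective this
      · rintro rfl
        exact Subtype.ext hχval
    rw [← hpre]
    exact hχ₀.preimage hcont
  have hfin : (Set.univ : Set ↥S).Finite := by
    obtain ⟨t, ht⟩ := isCompact_univ.elim_finite_subcover (fun χ : ↥S => ({χ} : Set ↥S))
      hall (fun x _ => Set.mem_iUnion.mpr ⟨x, rfl⟩)
    exact Set.Finite.subset (t.finite_toSet.biUnion fun χ _ => Set.finite_singleton χ) ht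
  haveI : Finite ↥S := Set.finite_univ_iff.mp hfin
  haveI hfinE : Finite (Q →+ Torus) :=
    Finite.of_injective (fun ψ : Q →+ Torus => (⟨⇑ψ, hmem ψ⟩ : ↥S))
      (fun ψ₁ ψ₂ h12 => AddMonoidHom.ext fun q => congrFun (congrArg Subtype.val h12) q)
  set n := Nat.card (Q →+ Torus) with hn
  have hnpos : 0 < n := Nat.card_pos
  have htors : {x : Torus | n • x = 0}.Finite := by
    have hsub : {x : Torus | n • x = 0} ⊆
        ⋃ d ∈ (↑n.divisors : Set ℕ), {u : Torus | addOrderOf u = d} := by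
      intro x hx
      have hdvd : addOrderOf x ∣ n := addOrderOf_dvd_of_nsmul_eq_zero hx
      exact Set.mem_iUnion₂.mpr ⟨addOrderOf x,
        Nat.mem_divisors.mpr ⟨hdvd, hnpos.ne'⟩, rfl⟩
    refine Set.Finite.subset (Set.Finite.biUnion n.divisors.finite_toSet fun d hd => ?_) hsub
    exact AddCircle.finite_setOf_addOrderOf_eq (p := (1:ℝ)) (Nat.pos_of_mem_divisors hd)
  haveI : Finite {x : Torus // n • x = 0} := htors.to_subtype
  have htm : ∀ (ψ : Q →+ Torus) (q : Q), n • ψ q = 0 := by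
    intro ψ q
    have hcard : n • ψ = 0 := by rw [hn]; exact card_nsmul_eq_zero'
    calc n • ψ q = (n • ψ) q := by simp
      _ = 0 := by rw [hcard]; rfl
  refine Finite.of_injective
    (fun q : Q => fun ψ : Q →+ Torus => (⟨ψ q, htm ψ q⟩ : {x : Torus // n • x = 0})) ?_
  intro q q' hqq
  by_contra hne
  obtain ⟨ψ, hψ⟩ := torus_sep (q - q') (sub_ne_zero.mpr hne)
  apply hψ
  have hval : ψ q = ψ q' := by simpa using congrArg Subtype.val (congrFun hqq ψ)
  rw [map_sub, hval, sub_self]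


end AuxSSChar

/-- If `(G,τ)` is metrizable precompact Hausdorff and `u` is a TB-sequence
with `τ = τ_u`, then the subgroup generated by the terms of `u` has finite index. -/
theorem stmt2 {G : Type*} [AddCommGroup G] (τ : TopologicalSpace G)
    (hpre : IsPrecompactGroupTopology τ) (hmet : @TopologicalSpace.MetrizableSpace G τ)
    (u : ℕ → G) (hu : IsTBSequence u) (hchar : IsTauU u τ) :
    (AddSubgroup.closure (Set.range u)).FiniteIndex := by
  classical
  letI := τ
  haveI hga : IsTopologicalAddGroup G := hpre.1.1
  haveI hT2 : T2Space G := hpre.1.2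
  set H := AddSubgroup.closure (Set.range u) with hH
  have hdual := dual_countable τ hpre.1.1 hpre.2 hmet
  have hquot : ∀ ψ : (G ⧸ H) →+ Torus,
      Continuous ⇑(ψ.comp (QuotientAddGroup.mk' H)) := by
    intro ψ
    set φ := ψ.comp (QuotientAddGroup.mk' H) with hφ
    set p : TopologicalSpace G := TopologicalSpace.induced ⇑φ inferInstance with hp
    have hgp : @IsTopologicalAddGroup G p _ := topologicalAddGroup_induced φ
    have hg' : @IsTopologicalAddGroup G (τ ⊓ p) _ := topologicalAddGroup_inf hpre.1.1 hgp
    have ht2' : @T2Space G (τ ⊓ p) := t2Space_antitone (inf_le_left : τ ⊓ p ≤ τ) hT2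
    have hcov : PrecompactCover (τ ⊓ p) := precompactCover_inf_induced τ hpre.1.1 hpre.2 φ
    have hconv : ConvergesToZero (τ ⊓ p) u := by
      unfold ConvergesToZero
      rw [_root_.nhds_inf (t₁ := τ) (t₂ := p) (a := (0:G))]
      refine Filter.tendsto_inf.mpr ⟨hchar.2.1, ?_⟩
      rw [hp, nhds_induced]
      rw [Filter.tendsto_comap_iff]
      have huφ : ⇑φ ∘ u = fun _ => (0 : Torus) := by
        funext k
        have hm : QuotientAddGroup.mk' H (u k) = 0 :=
          (QuotientAddGroup.eq_zero_iff _).mpr (AddSubgroup.subset_closure (Set.mem_range_self k))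
        show ψ ((QuotientAddGroup.mk' H) (u k)) = 0
        rw [hm, map_zero]
      rw [huφ, map_zero]
      exact tendsto_const_nhds
    have hle : τ ≤ τ ⊓ p := hchar.2.2 _ ⟨⟨hg', ht2'⟩, hcov⟩ hconv
    have hlep : τ ≤ p := le_trans hle inf_le_right
    rw [continuous_iff_le_induced]
    exact hlep
  haveI hcnt : Countable ((G ⧸ H) →+ Torus) := by
    haveI := hdual.to_subtype
    have hinj : Function.Injective (fun ψ : (G ⧸ H) →+ Torus =>
        (⟨ψ.comp (QuotientAddGroup.mk' H), hquot ψ⟩ :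
          {χ : G →+ Torus | Continuous ⇑χ})) := by
      intro ψ₁ ψ₂ h12
      have := congrArg Subtype.val h12
      exact (AddMonoidHom.cancel_right (QuotientAddGroup.mk'_surjective H)).mp this
    exact hinj.countable
  haveI : Finite (G ⧸ H) := finite_of_countable_dual _ hcnt
  exact AddSubgroup.finiteIndex_of_finite_quotient (H := H)

end SSChar
end
end

section
/- Let G be a Hausdorff locally quasi-convex topological abelian group whose Pontryagin dual G^∧ is discrete. Then G is precompact. -/
open Filter Topology

noncomputable section

namespace SSChar

variable {G : Type*}

/-! ### Auxiliary lemmas on the torus -/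

lemma aux_torus_norm_coe {s : ℝ} (hs : |s| ≤ 1/2) : ‖(s : Torus)‖ = |s| := by
  rw [AddCircle.norm_eq]
  norm_num
  rcases eq_or_lt_of_le (abs_le.mp hs).2 with h | h
  · subst h
    norm_num [round_eq]
  · have : round s = 0 :=
      round_eq_zero_iff.mpr ⟨(abs_le.mp hs).1.trans_eq (by norm_num), by linarith⟩
    rw [this]; norm_num

lemma aux_torus_rep (y : Torus) : ∃ r : ℝ, (r : Torus) = y ∧ |r| = ‖y‖ ∧ |r| ≤ 1/2 := by
  obtain ⟨x, rfl⟩ : ∃ x : ℝ, (x : Torus) = y := Quotient.exists_rep y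
  refine ⟨x - round x, ?_, ?_, abs_sub_round x⟩
  · have h0 : ((round x : ℝ) : Torus) = 0 := by
      rw [AddCircle.coe_eq_zero_iff]; exact ⟨round x, by simp⟩
    rw [sub_eq_add_neg, QuotientAddGroup.mk_add]
    simp [QuotientAddGroup.mk_neg, h0]
  · rw [AddCircle.norm_eq]; norm_num

lemma aux_mem_Tplus_of_norm {y : Torus} (h : ‖y‖ < 1/4) : y ∈ Tplus := by
  obtain ⟨r, hr, hn, _⟩ := aux_torus_rep y
  have habs : |r| ≤ 1/4 := by rw [hn]; linarith
  exact ⟨r, ⟨neg_le_of_abs_le habs, (abs_le.mp habs).2⟩, hr⟩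

lemma aux_norm_le_of_mem_Tplus {y : Torus} (h : y ∈ Tplus) : ‖y‖ ≤ 1/4 := by
  obtain ⟨s, hs, rfl⟩ := h
  have habs : |s| ≤ 1/4 := abs_le.mpr ⟨by linarith [hs.1], hs.2⟩
  rw [aux_torus_norm_coe (by linarith)]
  exact habs

lemma aux_coe_nsmul_torus (k : ℕ) (r : ℝ) : k • ((r : Torus)) = (((k * r : ℝ)) : Torus) := by
  rw [← nsmul_eq_mul]
  exact (AddMonoidHom.map_nsmul (QuotientAddGroup.mk' (AddSubgroup.zmultiples (1:ℝ))) k r).symm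

lemma aux_torus_small {n : ℕ} (hn : 1 ≤ n) {y : Torus}
    (h : ∀ k : ℕ, 1 ≤ k → k ≤ n → k • y ∈ Tplus) : ‖y‖ ≤ 1 / (4 * n) := by
  classical
  obtain ⟨r, rfl, hnr, hr2⟩ := aux_torus_rep y
  rw [← hnr]
  by_contra hlt
  push_neg at hlt
  have hn0 : (0:ℝ) < n := by exact_mod_cast hn
  have h1 : |r| ≤ 1/4 := by
    have := aux_norm_le_of_mem_Tplus (h 1 le_rfl hn)
    rwa [one_smul, ← hnr] at this
  have hne : ∃ k : ℕ, 1 ≤ k ∧ k ≤ n ∧ 1/4 < |(k:ℝ) * r| := by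
    refine ⟨n, hn, le_rfl, ?_⟩
    calc (1:ℝ)/4 = (n:ℝ) * (1/(4*n)) := by field_simp
      _ < n * |r| := mul_lt_mul_of_pos_left hlt hn0
      _ = |(n:ℝ)*r| := by rw [abs_mul, abs_of_nonneg hn0.le]
  obtain ⟨hk1, hkn, hkbig⟩ : 1 ≤ Nat.find hne ∧ Nat.find hne ≤ n ∧
      1/4 < |((Nat.find hne : ℕ):ℝ) * r| := Nat.find_spec hne
  set k := Nat.find hne with hkdef
  have hk2 : 2 ≤ k := by
    rcases Nat.lt_or_ge k 2 with hlt2 | h2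
    · interval_cases k
      · simp at hkbig; linarith
    · exact h2
  have hprev : ¬ (1 ≤ k - 1 ∧ k - 1 ≤ n ∧ 1/4 < |((k-1:ℕ):ℝ) * r|) :=
    Nat.find_min hne (by omega)
  have hprev' : |((k-1:ℕ):ℝ) * r| ≤ 1/4 := by
    by_contra hc
    exact hprev ⟨by omega, by omega, not_le.mp hc⟩
  have hcast : ((k:ℝ)) * r = ((k-1:ℕ):ℝ) * r + r := by
    have : ((k-1:ℕ):ℝ) = (k:ℝ) - 1 := by
      push_cast [Nat.cast_sub hk1]; ring
    rw [this]; ring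
  have hhalf : |(k:ℝ) * r| ≤ 1/2 := by
    rw [hcast]
    calc |((k-1:ℕ):ℝ) * r + r| ≤ |((k-1:ℕ):ℝ) * r| + |r| := abs_add_le _ _
      _ ≤ 1/4 + 1/4 := add_le_add hprev' h1
      _ = 1/2 := by norm_num
  have hnorm : ‖(k • ((r:ℝ) : Torus))‖ = |(k:ℝ) * r| := by
    rw [aux_coe_nsmul_torus, aux_torus_norm_coe hhalf]
  have hle := aux_norm_le_of_mem_Tplus (h k hk1 hkn)
  rw [hnorm] at hle
  linarith

/-- From discreteness of the character group one obtains a compact set `K` and an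
`ε > 0` such that any continuous character uniformly `ε`-small on `K` is trivial. -/
theorem aux_char_discrete_key {G : Type*} [AddCommGroup G] [t : TopologicalSpace G]
    (hdisc : charTopology G t = ⊥) :
    ∃ K : Set G, IsCompact K ∧ ∃ ε > (0:ℝ), ∀ χ : G →+ Torus, Continuous χ →
      (∀ x ∈ K, ‖χ x‖ < ε) → χ = 0 := by
  set SUB : Set (Set (charGroup G t)) :=
    { S | ∃ (K : Set G) (U : Set Torus), @IsCompact G t K ∧ IsOpen U ∧
        S = { χ : charGroup G t | ∀ x ∈ K, χ.1 x ∈ U } } with hSUB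
  have main : ∀ O : Set (charGroup G t), TopologicalSpace.GenerateOpen SUB O →
      ∀ χ₀, χ₀ ∈ O → ∃ K : Set G, IsCompact K ∧ ∃ ε > (0:ℝ),
        ∀ ψ : charGroup G t, (∀ x ∈ K, dist (ψ.1 x) (χ₀.1 x) < ε) → ψ ∈ O := by
    intro O hO
    induction hO with
    | basic S hS =>
      intro χ₀ hχ₀
      obtain ⟨K, U, hK, hU, rfl⟩ := hS
      have himg : IsCompact (χ₀.1 '' K) := hK.image χ₀.2
      have hsub : χ₀.1 '' K ⊆ U := by
        rintro _ ⟨x, hx, rfl⟩; exact hχ₀ x hx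
      obtain ⟨δ, hδ, hthick⟩ := himg.exists_thickening_subset_open hU hsub
      refine ⟨K, hK, δ, hδ, fun ψ hψ x hx => ?_⟩
      exact hthick (Metric.mem_thickening_iff.mpr ⟨χ₀.1 x, ⟨x, hx, rfl⟩, hψ x hx⟩)
    | univ =>
      intro χ₀ _
      exact ⟨∅, isCompact_empty, 1, one_pos, fun ψ _ => trivial⟩
    | inter S₁ S₂ _ _ ih₁ ih₂ =>
      intro χ₀ hχ₀
      obtain ⟨K₁, hK₁, ε₁, hε₁, h₁⟩ := ih₁ χ₀ hχ₀.1
      obtain ⟨K₂, hK₂, ε₂, hε₂, h₂⟩ := ih₂ χ₀ hχ₀.2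
      refine ⟨K₁ ∪ K₂, hK₁.union hK₂, min ε₁ ε₂, lt_min hε₁ hε₂, fun ψ hψ => ?_⟩
      exact ⟨h₁ ψ fun x hx => (hψ x (Or.inl hx)).trans_le (min_le_left _ _),
             h₂ ψ fun x hx => (hψ x (Or.inr hx)).trans_le (min_le_right _ _)⟩
    | sUnion S hS ih =>
      intro χ₀ hχ₀
      obtain ⟨s, hs, hχs⟩ := hχ₀
      obtain ⟨K, hK, ε, hε, h⟩ := ih s hs χ₀ hχs
      exact ⟨K, hK, ε, hε, fun ψ hψ => ⟨s, hs, h ψ hψ⟩⟩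
  have hO : TopologicalSpace.GenerateOpen SUB {ψ : charGroup G t | ψ.1 = 0} := by
    have h1 : @IsOpen (charGroup G t) (charTopology G t) {ψ : charGroup G t | ψ.1 = 0} := by
      rw [hdisc]
      exact @isOpen_discrete _ ⊥ (@DiscreteTopology.mk _ ⊥ rfl) _
    exact h1
  have h0 : (⟨0, continuous_const⟩ : charGroup G t) ∈ {ψ : charGroup G t | ψ.1 = 0} := rfl
  obtain ⟨K, hK, ε, hε, h⟩ := main _ hO ⟨0, continuous_const⟩ h0
  refine ⟨K, hK, ε, hε, fun χ hχ hsmall => ?_⟩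
  exact h ⟨χ, hχ⟩ (fun x hx => by simpa [dist_eq_norm] using hsmall x hx)

/-- A Hausdorff locally quasi-convex topological abelian group with
discrete Pontryagin dual is precompact. -/
theorem stmt12 {G : Type*} [AddCommGroup G] [t : TopologicalSpace G]
    [IsTopologicalAddGroup G] [T2Space G]
    (hlqc : IsLocallyQuasiConvex t) (hdisc : charTopology G t = ⊥) :
    PrecompactCover t := by
  classical
  obtain ⟨K, hK, ε, hε, hkey⟩ := aux_char_discrete_key (t := t) hdisc
  intro U hU
  obtain ⟨V, hV, hVU, hQC⟩ := hlqc U hU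
  -- choose n with 1/(2n) < ε/2
  obtain ⟨m, hm⟩ := exists_nat_one_div_lt (half_pos hε)
  set n : ℕ := m + 1 with hndef
  have hn1 : 1 ≤ n := Nat.le_add_left 1 m
  have hnpos : (0:ℝ) < n := by exact_mod_cast hn1
  have hnε : 1 / (2 * (n:ℝ)) < ε / 2 := by
    have h1 : (1:ℝ)/(n:ℝ) < ε/2 := by
      have : ((m:ℝ) + 1) = (n:ℝ) := by push_cast [hndef]; ring
      rwa [this] at hm
    have h2 : 1/(2*(n:ℝ)) ≤ 1/(n:ℝ) := by
      apply one_div_le_one_div_of_le hnpos; linarith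
    linarith
  -- the neighborhood W of 0 with k • W ⊆ V for 1 ≤ k ≤ n
  set W : Set G := ⋂ k ∈ Finset.Icc 1 n, (fun x : G => k • x) ⁻¹' V with hWdef
  have hW : W ∈ 𝓝 (0:G) := by
    rw [hWdef]
    refine (Filter.biInter_finset_mem _).mpr fun k _ => ?_
    refine ((continuous_nsmul k).continuousAt (x := (0:G))).preimage_mem_nhds ?_
    rw [smul_zero]; exact hV
  have hWnorm : ∀ χ : G →+ Torus, (∀ v ∈ V, χ v ∈ Tplus) →
      ∀ w ∈ W, ‖χ w‖ ≤ 1/(4*(n:ℝ)) := by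
    intro χ hχ w hw
    refine aux_torus_small hn1 fun k hk1 hkn => ?_
    rw [← map_nsmul]
    exact hχ _ (Set.mem_iInter₂.mp hw k (Finset.mem_Icc.mpr ⟨hk1, hkn⟩))
  -- cover K by finitely many translates of W
  obtain ⟨F₀, -, hKcov⟩ := hK.elim_nhds_subcover (fun f => {y : G | y - f ∈ W})
    (fun x _ => by
      have hc : Continuous fun y : G => y - x := continuous_id.sub continuous_const
      have := (hc.continuousAt (x := x)).preimage_mem_nhds (by rwa [sub_self])
      exact this)
  have hcov : ∀ x ∈ K, ∃ f ∈ F₀, x - f ∈ W := by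
    intro x hx
    obtain ⟨f, hf, hxf⟩ := Set.mem_iUnion₂.mp (hKcov hx)
    exact ⟨f, hf, hxf⟩
  -- the polar of V
  set P : Set (G →+ Torus) := {χ | Continuous χ ∧ ∀ v ∈ V, χ v ∈ Tplus} with hPdef
  have hsep : ∀ φ ∈ P, ∀ ψ ∈ P, (∀ f ∈ F₀, dist (φ f) (ψ f) < ε/2) → φ = ψ := by
    intro φ hφ ψ hψ hclose
    have hz : φ - ψ = 0 := by
      apply hkey (φ - ψ) (hφ.1.sub hψ.1)
      intro x hx
      obtain ⟨f, hf, hxf⟩ := hcov x hx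
      have hsplit : (φ - ψ) x = (φ - ψ) f + (φ - ψ) (x - f) := by
        rw [← map_add]
        congr 1
        abel
      have hb1 : ‖(φ - ψ) f‖ < ε/2 := by
        rw [AddMonoidHom.sub_apply, ← dist_eq_norm]
        exact hclose f hf
      have hb2 : ‖(φ - ψ) (x - f)‖ < ε/2 := by
        rw [AddMonoidHom.sub_apply]
        calc ‖φ (x - f) - ψ (x - f)‖ ≤ ‖φ (x - f)‖ + ‖ψ (x - f)‖ := norm_sub_le _ _
          _ ≤ 1/(4*(n:ℝ)) + 1/(4*(n:ℝ)) :=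
              add_le_add (hWnorm φ hφ.2 _ hxf) (hWnorm ψ hψ.2 _ hxf)
          _ = 1/(2*(n:ℝ)) := by field_simp; ring
          _ < ε/2 := hnε
      calc ‖(φ - ψ) x‖ = ‖(φ - ψ) f + (φ - ψ) (x - f)‖ := by rw [← hsplit]
        _ ≤ ‖(φ - ψ) f‖ + ‖(φ - ψ) (x - f)‖ := norm_add_le _ _
        _ < ε/2 + ε/2 := add_lt_add hb1 hb2
        _ = ε := by ring
    exact sub_eq_zero.mp hz
  -- P is finite
  have hPfin : P.Finite := by
    rw [← Set.not_infinite]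
    intro hinf
    haveI := hinf.to_subtype
    obtain ⟨s, hsfin, hscov⟩ :=
      (Metric.totallyBounded_iff.mp (isCompact_univ : IsCompact (Set.univ : Set Torus)).totallyBounded) (ε/4) (by positivity)
    haveI : Finite ↥s := hsfin.to_subtype
    have hctr : ∀ y : Torus, ∃ c : ↥s, y ∈ Metric.ball (c:Torus) (ε/4) := by
      intro y
      obtain ⟨c, hc, hyc⟩ := Set.mem_iUnion₂.mp (hscov (Set.mem_univ y))
      exact ⟨⟨c, hc⟩, hyc⟩
    choose ctr hctr using hctr
    obtain ⟨φ, ψ, hne, heq⟩ := Finite.exists_ne_map_eq_of_infinite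
      (fun χ : ↥P => fun f : {x // x ∈ F₀} => ctr (χ.1 f.1))
    apply hne
    apply Subtype.ext
    apply hsep _ φ.2 _ ψ.2
    intro f hf
    have h1 := hctr (φ.1.1 f)
    have h2 := hctr (ψ.1.1 f)
    have h3 : ctr (φ.1.1 f) = ctr (ψ.1.1 f) := congrFun heq ⟨f, hf⟩
    rw [Metric.mem_ball, h3] at h1
    rw [Metric.mem_ball] at h2
    calc dist (φ.1.1 f) (ψ.1.1 f)
        ≤ dist (φ.1.1 f) (ctr (ψ.1.1 f) : Torus) + dist (ctr (ψ.1.1 f) : Torus) (ψ.1.1 f) :=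
          dist_triangle _ _ _
      _ < ε/4 + ε/4 := add_lt_add h1 (dist_comm (ψ.1.1 f) _ ▸ h2)
      _ = ε/2 := by ring
  -- the evaluation map into the finite power of the torus
  haveI : Fintype ↥P := hPfin.fintype
  set Φ : G → (↥P → Torus) := fun g χ => χ.1 g with hΦdef
  have htb : TotallyBounded (Set.range Φ) :=
    isCompact_univ.totallyBounded.subset (Set.subset_univ _)
  obtain ⟨C, hCsub, hCfin, hCcov⟩ := totallyBounded_iff_subset.mp htb
    {p | dist p.1 p.2 < 1/4} (Metric.dist_mem_uniformity (by norm_num))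
  haveI : Finite ↥C := hCfin.to_subtype
  have hpre : ∀ y : ↥C, ∃ g : G, Φ g = y.1 := fun y => hCsub y.2
  choose gf hgf using hpre
  refine ⟨Set.range gf, Set.finite_range gf, fun x => ?_⟩
  obtain ⟨y, hyC, hxy⟩ := Set.mem_iUnion₂.mp (hCcov ⟨x, rfl⟩)
  refine ⟨gf ⟨y, hyC⟩, Set.mem_range_self _, ?_⟩
  apply hVU
  by_contra hxV
  obtain ⟨χ, hχc, hχV, hχg⟩ := hQC _ hxV
  have hχP : χ ∈ P := ⟨hχc, hχV⟩
  apply hχg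
  apply aux_mem_Tplus_of_norm
  have hdistΦ : dist (Φ x) (Φ (gf ⟨y, hyC⟩)) < 1/4 := by
    rw [hgf ⟨y, hyC⟩]
    exact hxy
  calc ‖χ (x - gf ⟨y, hyC⟩)‖ = dist (χ x) (χ (gf ⟨y, hyC⟩)) := by
        rw [map_sub, dist_eq_norm]
    _ = dist (Φ x ⟨χ, hχP⟩) (Φ (gf ⟨y, hyC⟩) ⟨χ, hχP⟩) := rfl
    _ ≤ dist (Φ x) (Φ (gf ⟨y, hyC⟩)) := dist_le_pi_dist _ _ _
    _ < 1/4 := hdistΦ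

end SSChar
end
end

section
/- Every ss-characterized precompact Hausdorff abelian group is hereditarily disconnected, i.e., the connected component of 0 is the trivial subgroup {0}. -/
open Filter Topology

noncomputable section

namespace SSChar

variable {G : Type*}

section Aux

/-- In a T1 regular space, a countable preconnected set is a singleton. -/
lemma aux_countable_preconnected {X : Type*} [TopologicalSpace X] [T1Space X] [RegularSpace X]
    {S : Set X} (hS : S.Countable) (hconn : IsPreconnected S) {a b : X}
    (ha : a ∈ S) (hb : b ∈ S) : a = b := by
  by_contra hne
  haveI := hS.to_subtype
  haveI : ConnectedSpace S := Subtype.connectedSpace ⟨⟨a, ha⟩, hconn⟩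
  haveI : T4Space S := {}
  have hne' : (⟨a, ha⟩ : S) ≠ ⟨b, hb⟩ := fun h => hne (congrArg Subtype.val h)
  obtain ⟨f, hf, hfab⟩ := separatesPoints_continuous_of_t35Space (X := S) hne'
  have hrange : IsPreconnected (Set.range f) := isPreconnected_range hf
  have hcnt : (Set.range f).Countable := Set.countable_range f
  have key : ∀ c d : ℝ, c < d → Set.Icc c d ⊆ Set.range f → False := by
    intro c d hcd hsub
    have h1 : (Set.Icc c d).Countable := hcnt.mono hsub
    haveI := h1.to_subtype
    have h2 := Cardinal.mk_Icc_real hcd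
    have h3 : (Cardinal.mk (Set.Icc c d)) ≤ Cardinal.aleph0 := Cardinal.mk_le_aleph0
    rw [h2] at h3
    exact absurd h3 (not_le.mpr Cardinal.aleph0_lt_continuum)
  rcases lt_or_gt_of_ne hfab with h | h
  · exact key _ _ h (hrange.Icc_subset (Set.mem_range_self _) (Set.mem_range_self _))
  · exact key _ _ h (hrange.Icc_subset (Set.mem_range_self _) (Set.mem_range_self _))

end Aux
lemma aux_countable_closure {G : Type*} [AddCommGroup G] {s : Set G} (hs : s.Countable) :
    (AddSubgroup.closure s : Set G).Countable := by
  have h1 : (AddSubgroup.closure s : Set G) = (AddSubmonoid.closure (s ∪ -s) : Set G) := by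
    rw [← AddSubgroup.closure_toAddSubmonoid]; rfl
  have hs' : (s ∪ -s).Countable := hs.union (hs.preimage neg_injective)
  haveI := hs'.to_subtype
  rw [h1, AddSubmonoid.closure_eq_image_sum, ← Set.range_list_map_coe]
  exact (Set.countable_range _).image _

/-- The canonical injection of `ℚ/ℤ` into `𝕋 = ℝ/ℤ`. -/
def ratCircleHom : AddCircle (1 : ℚ) →+ Torus :=
  QuotientAddGroup.lift (AddSubgroup.zmultiples (1 : ℚ))
    ((QuotientAddGroup.mk' (AddSubgroup.zmultiples (1 : ℝ))).comp
      (Rat.castHom ℝ).toAddMonoidHom)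
    (by
      intro q hq
      obtain ⟨n, rfl⟩ := AddSubgroup.mem_zmultiples_iff.mp hq
      rw [AddMonoidHom.mem_ker, AddMonoidHom.comp_apply]
      simp only [RingHom.toAddMonoidHom_eq_coe, AddMonoidHom.coe_coe]
      rw [QuotientAddGroup.mk'_apply, QuotientAddGroup.eq_zero_iff]
      refine AddSubgroup.mem_zmultiples_iff.mpr ⟨n, ?_⟩
      push_cast
      simp)

lemma ratCircleHom_injective : Function.Injective ratCircleHom := by
  rw [injective_iff_map_eq_zero]
  intro a ha
  induction a using QuotientAddGroup.induction_on with
  | H q =>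
    have hq : ((q : ℝ) : Torus) = 0 := ha
    rw [show ((q:ℝ) : Torus) = (QuotientAddGroup.mk' (AddSubgroup.zmultiples (1:ℝ))) (q:ℝ) from rfl,
      QuotientAddGroup.mk'_apply, QuotientAddGroup.eq_zero_iff] at hq
    obtain ⟨n, hn⟩ := AddSubgroup.mem_zmultiples_iff.mp hq
    have hqn : q = n := by
      have : ((n : ℚ) : ℝ) = (q : ℝ) := by rw [← hn]; push_cast; simp
      exact_mod_cast this.symm
    rw [show ((q : AddCircle (1:ℚ)) =
      (QuotientAddGroup.mk' (AddSubgroup.zmultiples (1:ℚ))) q) from rfl,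
      QuotientAddGroup.mk'_apply, QuotientAddGroup.eq_zero_iff]
    exact AddSubgroup.mem_zmultiples_iff.mpr ⟨n, by rw [hqn]; simp⟩

instance : Countable (AddCircle (1 : ℚ)) :=
  Function.Surjective.countable (f := (QuotientAddGroup.mk : ℚ → AddCircle (1 : ℚ)))
    Quotient.mk''_surjective
lemma aux_sub_nhds {G : Type*} [AddCommGroup G] (t : TopologicalSpace G)
    (ht : @IsTopologicalAddGroup G t _) {U : Set G} (hU : U ∈ @nhds G t 0) :
    ∃ V ∈ @nhds G t 0, ∀ x ∈ V, ∀ y ∈ V, x - y ∈ U := by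
  letI := t
  have hc : Filter.Tendsto (fun p : G × G => p.1 - p.2) (nhds ((0 : G), (0 : G))) (nhds 0) := by
    have := (continuous_sub : Continuous fun p : G × G => p.1 - p.2).tendsto ((0 : G), (0 : G))
    simpa using this
  have hmem : (fun p : G × G => p.1 - p.2) ⁻¹' U ∈ nhds ((0 : G), (0 : G)) := hc hU
  rw [mem_nhds_prod_iff] at hmem
  obtain ⟨V₁, hV₁, V₂, hV₂, hsub⟩ := hmem
  refine ⟨V₁ ∩ V₂, Filter.inter_mem hV₁ hV₂, fun x hx y hy => ?_⟩
  exact hsub (Set.mk_mem_prod hx.1 hy.2)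

lemma aux_precompact_inf {G : Type*} [AddCommGroup G] (τ : TopologicalSpace G)
    (hg : @IsTopologicalAddGroup G τ _) (hpc : PrecompactCover τ) (ψ : G →+ Torus) :
    PrecompactCover (τ ⊓ TopologicalSpace.induced ψ inferInstance) := by
  intro U hU
  rw [@nhds_inf G τ (TopologicalSpace.induced (⇑ψ) inferInstance) (0 : G)] at hU
  rw [Filter.mem_inf_iff] at hU
  obtain ⟨U₁, hU₁, U₂, hU₂, rfl⟩ := hU
  rw [nhds_induced] at hU₂
  obtain ⟨W, hW, hWsub⟩ := hU₂
  rw [map_zero] at hW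
  -- shrink
  obtain ⟨V, hV, hVd⟩ := aux_sub_nhds τ hg hU₁
  obtain ⟨W', hW', hW'd⟩ := aux_sub_nhds inferInstance inferInstance hW
  obtain ⟨O, hOsub, hOopen, hO0⟩ := mem_nhds_iff.mp hW'
  -- compactness of the torus
  haveI : Fact ((0 : ℝ) < 1) := ⟨one_pos⟩
  have hcov : (Set.univ : Set Torus) ⊆ ⋃ t : Torus, (fun y => y - t) ⁻¹' O := by
    intro y _
    exact Set.mem_iUnion.mpr ⟨y, by simpa using hO0⟩
  obtain ⟨T, hT⟩ := isCompact_univ.elim_finite_subcover _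
    (fun t : Torus => hOopen.preimage (continuous_sub_right t)) hcov
  -- covering of G for V
  obtain ⟨F, hF, hFcov⟩ := hpc V hV
  classical
  let P : G → Torus → Set G := fun f t => {x | x - f ∈ V ∧ ψ x - t ∈ O}
  let g : G → Torus → G := fun f t => if h : (P f t).Nonempty then h.choose else 0
  refine ⟨Set.image2 g F ↑T, Set.Finite.image2 _ hF T.finite_toSet, fun x => ?_⟩
  obtain ⟨f, hfF, hxf⟩ := hFcov x
  have : ψ x ∈ ⋃ t ∈ T, (fun y => y - t) ⁻¹' O := hT (Set.mem_univ _)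
  obtain ⟨t, htT, hxt⟩ := Set.mem_iUnion₂.mp this
  have hne : (P f t).Nonempty := ⟨x, hxf, hxt⟩
  refine ⟨g f t, Set.mem_image2_of_mem hfF htT, ?_⟩
  have hp : g f t ∈ P f t := by
    simp only [g, dif_pos hne]
    exact hne.choose_spec
  constructor
  · have h1 : (x - f) - (g f t - f) ∈ U₁ := hVd _ hxf _ hp.1
    simpa [sub_sub_sub_cancel_right] using h1
  · apply hWsub
    have h2 : (ψ x - t) - (ψ (g f t) - t) ∈ W := hW'd _ (hOsub hxt) _ (hOsub hp.2)
    simp only [Set.mem_preimage, map_sub]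
    simpa [sub_sub_sub_cancel_right] using h2

/-- Key lemma: if `τ = τ_u` and `ψ` is a character with `ψ ∘ u → 0`, then `ψ` is
`τ`-continuous. -/
lemma aux_char_continuous {G : Type*} [AddCommGroup G] {τ : TopologicalSpace G} {u : ℕ → G}
    (h : IsTauU u τ) (ψ : G →+ Torus)
    (hu : Filter.Tendsto (fun n => ψ (u n)) Filter.atTop (nhds 0)) :
    @Continuous G Torus τ _ ψ := by
  obtain ⟨⟨⟨hg, ht2⟩, hpc⟩, hconv, hmax⟩ := h
  set ti := TopologicalSpace.induced ψ (inferInstance : TopologicalSpace Torus) with hti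
  have hg' : @IsTopologicalAddGroup G (τ ⊓ ti) _ :=
    topologicalAddGroup_inf hg (topologicalAddGroup_induced ψ)
  have ht2' : @T2Space G (τ ⊓ ti) := t2Space_antitone inf_le_left ht2
  have hpc' : PrecompactCover (τ ⊓ ti) := aux_precompact_inf τ hg hpc ψ
  have hconv' : ConvergesToZero (τ ⊓ ti) u := by
    unfold ConvergesToZero
    rw [@nhds_inf G τ ti (0 : G)]
    refine Filter.tendsto_inf.mpr ⟨hconv, ?_⟩
    rw [hti, nhds_induced, map_zero]
    exact Filter.tendsto_comap_iff.mpr hu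
  have hle : τ ≤ τ ⊓ ti := hmax _ ⟨⟨hg', ht2'⟩, hpc'⟩ hconv'
  exact continuous_iff_le_induced.mpr (le_trans hle inf_le_right)
/-- Every ss-characterized precompact Hausdorff abelian group is
hereditarily disconnected: the connected component of `0` is trivial. -/
theorem stmt16 {G : Type*} [AddCommGroup G] (τ : TopologicalSpace G)
    (hss : SSCharacterized τ) :
    @connectedComponent G τ 0 = {0} := by
  obtain ⟨u, hτu⟩ := hss
  have hτu' := hτu
  obtain ⟨⟨⟨hg, ht2⟩, hpc⟩, hconv, hmax⟩ := hτu'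
  letI := τ
  set H : AddSubgroup G := AddSubgroup.closure (Set.range u) with hH
  set C : Set G := connectedComponent (0 : G) with hC
  have hCconn : IsPreconnected C := isPreconnected_connectedComponent
  have h0C : (0 : G) ∈ C := mem_connectedComponent
  -- Step A : `C ⊆ H`
  have hCH : C ⊆ (H : Set G) := by
    intro x hx
    by_contra hxH
    have hxq : (QuotientAddGroup.mk x : G ⧸ H) ≠ 0 := by
      simpa [QuotientAddGroup.eq_zero_iff] using hxH
    obtain ⟨χ, hχ⟩ := CharacterModule.exists_character_apply_ne_zero_of_ne_zero hxq
    let χ' : (G ⧸ H) →+ AddCircle (1 : ℚ) := χ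
    let ψ : G →+ Torus := (ratCircleHom.comp χ').comp (QuotientAddGroup.mk' H)
    have hψu : ∀ n, ψ (u n) = 0 := by
      intro n
      have h1 : (QuotientAddGroup.mk' H) (u n) = 0 :=
        (QuotientAddGroup.eq_zero_iff _).mpr
          (AddSubgroup.subset_closure (Set.mem_range_self n))
      have h2 : ψ (u n) = ratCircleHom (χ' ((QuotientAddGroup.mk' H) (u n))) := rfl
      rw [h2, h1, map_zero, map_zero]
    have hcont : @Continuous G Torus τ _ ψ := by
      refine aux_char_continuous hτu ψ ?_
      simpa [hψu] using (tendsto_const_nhds :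
        Filter.Tendsto (fun _ : ℕ => (0 : Torus)) Filter.atTop (nhds 0))
    have himg : IsPreconnected (ψ '' C) := hCconn.image ψ hcont.continuousOn
    have hsub : ψ '' C ⊆ Set.range ratCircleHom := by
      rintro y ⟨c, -, rfl⟩
      exact ⟨χ' (QuotientAddGroup.mk' H c), rfl⟩
    have hcnt : (ψ '' C).Countable := (Set.countable_range ratCircleHom).mono hsub
    have h0m : (0 : Torus) ∈ ψ '' C := ⟨0, h0C, map_zero ψ⟩
    have hxm : ψ x ∈ ψ '' C := ⟨x, hx, rfl⟩
    have hψx : ψ x ≠ 0 := by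
      intro h0
      have : χ' (QuotientAddGroup.mk' H x) = 0 := by
        apply ratCircleHom_injective
        simpa [ψ, map_zero] using h0
      exact hχ this
    exact hψx (aux_countable_preconnected hcnt himg hxm h0m)
  -- Step B : `C` is countable, hence a singleton
  have hCcnt : C.Countable :=
    Set.Countable.mono hCH (aux_countable_closure (Set.countable_range u))
  refine Set.eq_singleton_iff_unique_mem.mpr ⟨h0C, fun y hy => ?_⟩
  exact aux_countable_preconnected hCcnt hCconn hy h0C

end SSChar
end
end

section
/- Let G be a Hausdorff topological abelian group and H a closed subgroup of G. Assume that the quotient group G/H (with the quotient topology) has no non-trivial convergent sequences, i.e., every convergent sequence in G/H is eventually constant. Then G is sequentially complete if and only if H (with the subspace topology) is sequentially complete. -/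
open Filter Topology

noncomputable section

namespace SSChar

variable {G : Type*}

/-- Let `H` be a closed subgroup of a Hausdorff topological abelian group
`G` such that every convergent sequence in the quotient `G/H` is eventually constant.
Then `G` is sequentially complete iff `H` is sequentially complete. -/
theorem stmt17 {G : Type*} [AddCommGroup G] [t : TopologicalSpace G]
    [IsTopologicalAddGroup G] [T2Space G]
    (H : AddSubgroup G) (hcl : IsClosed (H : Set G))
    (hq : ∀ (y : ℕ → G ⧸ H) (q : G ⧸ H),
      Filter.Tendsto y Filter.atTop (@nhds (G ⧸ H) (quotientTopology H t) q) →
      ∃ N : ℕ, ∀ n ≥ N, y n = y N) :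
    SeqComplete t ↔ SeqComplete (restrictTopology H t) := by
  constructor
  · -- G seq complete → H seq complete
    intro hG x hx
    have hx' : ∀ U ∈ nhds (0 : G), ∃ N : ℕ, ∀ m ≥ N, ∀ n ≥ N,
        (x m : G) - (x n : G) ∈ U := by
      intro U hU
      have hV : (Subtype.val ⁻¹' U : Set H) ∈ @nhds H (restrictTopology H t) 0 := by
        rw [restrictTopology, nhds_induced]
        exact Filter.preimage_mem_comap (by simpa using hU)
      obtain ⟨N, hN⟩ := hx _ hV
      exact ⟨N, fun m hm n hn => hN m hm n hn⟩
    obtain ⟨a, ha⟩ := hG (fun n => (x n : G)) hx'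
    have haH : a ∈ H := hcl.mem_of_tendsto ha (Filter.Eventually.of_forall fun n => (x n).2)
    refine ⟨⟨a, haH⟩, ?_⟩
    rw [restrictTopology, nhds_induced, Filter.tendsto_comap_iff]
    exact ha
  · -- H seq complete → G seq complete
    intro hH x hx
    set d : ℕ → G ⧸ H := fun n => QuotientAddGroup.mk (x (n + 1) - x n) with hd_def
    have hd0 : Filter.Tendsto (fun n => x (n + 1) - x n) Filter.atTop (nhds (0 : G)) := by
      rw [Filter.tendsto_def]
      intro U hU
      obtain ⟨N, hN⟩ := hx U hU
      rw [Filter.mem_atTop_sets]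
      exact ⟨N, fun n hn => hN (n + 1) (le_trans hn (Nat.le_succ n)) n hn⟩
    have hmkc : @Continuous G (G ⧸ H) t (quotientTopology H t) (QuotientAddGroup.mk) :=
      continuous_coinduced_rng
    have hdq : Filter.Tendsto d Filter.atTop (@nhds (G ⧸ H) (quotientTopology H t) 0) := by
      have h0 : (QuotientAddGroup.mk (0 : G) : G ⧸ H) = 0 := rfl
      have := (hmkc.tendsto (0 : G)).comp hd0
      rwa [h0] at this
    obtain ⟨N, hN⟩ := hq d 0 hdq
    -- d N = 0
    have hdN : d N = 0 := by
      by_contra hne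
      have hclosed : IsClosed[quotientTopology H t] {d N} := by
        rw [← isOpen_compl_iff, quotientTopology, isOpen_coinduced]
        have : (QuotientAddGroup.mk ⁻¹' ({d N}ᶜ) : Set G)
            = ((fun g : G => g - (x (N + 1) - x N)) ⁻¹' (H : Set G))ᶜ := by
          ext g
          simp only [Set.mem_preimage, Set.mem_compl_iff, Set.mem_singleton_iff, hd_def,
            QuotientAddGroup.eq_iff_sub_mem, SetLike.mem_coe]
        rw [this]
        exact (hcl.preimage (continuous_sub_right _)).isOpen_compl
      have hmem : ({d N}ᶜ : Set (G ⧸ H)) ∈ @nhds (G ⧸ H) (quotientTopology H t) 0 := by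
        letI := quotientTopology H t
        exact hclosed.isOpen_compl.mem_nhds (by simpa using Ne.symm hne)
      have := (hdq hmem)
      rw [Filter.mem_map, Filter.mem_atTop_sets] at this
      obtain ⟨M, hM⟩ := this
      have h1 := hM (max N M) (le_max_right _ _)
      have h2 := hN (max N M) (le_max_left _ _)
      exact h1 h2
    -- y n = y N for n ≥ N
    have hy : ∀ n ≥ N, (QuotientAddGroup.mk (x n) : G ⧸ H) = QuotientAddGroup.mk (x N) := by
      intro n hn
      induction n with
      | zero => rw [Nat.le_zero.mp hn]
      | succ k ih =>
        rcases Nat.lt_or_ge N (k + 1) with h | h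
        · have hk : N ≤ k := Nat.lt_succ_iff.mp h
          have hdk : d k = 0 := by rw [hN k hk, hdN]
          have : (QuotientAddGroup.mk (x (k + 1)) : G ⧸ H) = QuotientAddGroup.mk (x k) := by
            have := hdk
            simp only [hd_def, QuotientAddGroup.mk_sub] at this
            linear_combination (norm := abel_nf) this
          rw [this, ih hk]
        · rw [Nat.le_antisymm h hn]
    have hmem : ∀ n : ℕ, x (n + N) - x N ∈ H := by
      intro n
      have := hy (n + N) (Nat.le_add_left _ _)
      rwa [QuotientAddGroup.eq_iff_sub_mem] at this
    set h : ℕ → H := fun n => ⟨x (n + N) - x N, hmem n⟩ with hh_def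
    have hhc : ∀ V ∈ @nhds H (restrictTopology H t) 0, ∃ N' : ℕ, ∀ m ≥ N', ∀ n ≥ N',
        h m - h n ∈ V := by
      intro V hV
      rw [restrictTopology, nhds_induced, Filter.mem_comap] at hV
      obtain ⟨U, hU, hUV⟩ := hV
      obtain ⟨N', hN'⟩ := hx U (by simpa using hU)
      refine ⟨N', fun m hm n hn => hUV ?_⟩
      have : ((h m - h n : H) : G) = x (m + N) - x (n + N) := by
        simp [hh_def]
      show ((h m - h n : H) : G) ∈ U
      rw [this]
      exact hN' (m + N) (le_trans hm (Nat.le_add_right _ _))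
        (n + N) (le_trans hn (Nat.le_add_right _ _))
    obtain ⟨a, ha⟩ := hH h hhc
    rw [restrictTopology, nhds_induced, Filter.tendsto_comap_iff] at ha
    have ha' : Filter.Tendsto (fun n => x (n + N)) Filter.atTop (nhds ((a : G) + x N)) := by
      have := ha.add_const (x N)
      simpa [Function.comp, hh_def, sub_add_cancel] using this
    exact ⟨(a : G) + x N, (Filter.tendsto_add_atTop_iff_nat N).mp ha'⟩

end SSChar
end
end
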